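/- arXiv:1701.04956 — 6 statements merged into one kernel-verified Lean document; each statement's English description precedes it below -/
import Mathlib

section
/- For n ≥ 2, the statistics 2χ_1 + χ_2 and χ_{n−1} + 2χ_n are both 1-mesic under the action of φ on I_n; explicitly, for every independent set S ∈ I_n and every integer m ≥ 1 with φ^m(S) = S, one has ∑_{i=0}^{m−1} ( 2χ_1(φ^i(S)) + χ_2(φ^i(S)) ) = m and ∑_{i=0}^{m−1} ( χ_{n−1}(φ^i(S)) + 2χ_n(φ^i(S)) ) = m. -/
/-- An independent set of the path graph `P_n` (vertices `1,…,n`, edges `{i,i+1}`):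
a subset of `{1,…,n}` containing no two adjacent vertices. -/
def IndepSet (n : ℕ) (S : Finset ℕ) : Prop :=
  S ⊆ Finset.Icc 1 n ∧ ∀ i ∈ S, i + 1 ∉ S

instance (n : ℕ) (S : Finset ℕ) : Decidable (IndepSet n S) := by
  unfold IndepSet; infer_instance

/-- The toggle `τ_i` acting on independent sets of the path graph `P_n`. -/
def toggle (n i : ℕ) (S : Finset ℕ) : Finset ℕ :=
  if i ∈ S then S.erase i
  else if IndepSet n (insert i S) then insert i S
  else S

/-- `φ = τ_n ∘ ⋯ ∘ τ_2 ∘ τ_1` (toggle at each vertex from left to right). -/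
def phi (n : ℕ) (S : Finset ℕ) : Finset ℕ :=
  (List.range n).foldl (fun T k => toggle n (k + 1) T) S

/-- `φ⁻¹ = τ_1 ∘ τ_2 ∘ ⋯ ∘ τ_n` (toggle at each vertex from right to left). -/
def phiInv (n : ℕ) (S : Finset ℕ) : Finset ℕ :=
  (List.range n).foldr (fun k T => toggle n (k + 1) T) S

lemma mem_toggle_ne {n i j : ℕ} (S : Finset ℕ) (h : j ≠ i) :
    j ∈ toggle n i S ↔ j ∈ S := by
  unfold toggle
  split_ifs <;> simp [Finset.mem_erase, Finset.mem_insert, h]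

lemma indep_mono {n : ℕ} {S T : Finset ℕ} (hsub : T ⊆ S) (hS : IndepSet n S) :
    IndepSet n T :=
  ⟨hsub.trans hS.1, fun i hi h1 => hS.2 i (hsub hi) (hsub h1)⟩

lemma indep_toggle (n i : ℕ) (S : Finset ℕ) (hS : IndepSet n S) :
    IndepSet n (toggle n i S) := by
  unfold toggle
  split_ifs with h1 h2
  · exact indep_mono (Finset.erase_subset _ _) hS
  · exact h2
  · exact hS

lemma mem_foldl_of_ne {n j : ℕ} (l : List ℕ) (S : Finset ℕ)
    (h : ∀ k ∈ l, k + 1 ≠ j) :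
    j ∈ l.foldl (fun T k => toggle n (k + 1) T) S ↔ j ∈ S := by
  induction l generalizing S with
  | nil => simp
  | cons a l ih =>
    simp only [List.foldl_cons]
    rw [ih _ (fun k hk => h k (List.mem_cons_of_mem _ hk)),
        mem_toggle_ne S (Ne.symm (h a List.mem_cons_self))]

lemma indep_foldl (n : ℕ) (l : List ℕ) (S : Finset ℕ) (hS : IndepSet n S) :
    IndepSet n (l.foldl (fun T k => toggle n (k + 1) T) S) := by
  induction l generalizing S with
  | nil => exact hS
  | cons a l ih => exact ih _ (indep_toggle _ _ _ hS)

lemma indep_phi (n : ℕ) (S : Finset ℕ) (hS : IndepSet n S) :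
    IndepSet n (phi n S) := indep_foldl n _ S hS

lemma one_mem_phi {n : ℕ} (hn : 2 ≤ n) (S : Finset ℕ) (hS : IndepSet n S) :
    1 ∈ phi n S ↔ (1 ∉ S ∧ 2 ∉ S) := by
  unfold phi
  obtain ⟨k, rfl⟩ : ∃ k, n = k + 1 := ⟨n - 1, by omega⟩
  rw [List.range_succ_eq_map]
  simp only [List.foldl_cons]
  rw [mem_foldl_of_ne]
  · unfold toggle
    split_ifs with h1 h2
    · simp [h1]
    · simp only [Finset.mem_insert, true_or, true_iff]
      refine ⟨h1, fun h2' => h2.2 1 (Finset.mem_insert_self _ _) ?_⟩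
      exact Finset.mem_insert_of_mem h2'
    · constructor
      · intro h; exact absurd h h1
      · rintro ⟨hh1, hh2⟩
        exfalso; apply h2
        constructor
        · intro x hx
          rcases Finset.mem_insert.mp hx with rfl | hx
          · exact Finset.mem_Icc.mpr ⟨le_refl 1, by omega⟩
          · exact hS.1 hx
        · intro i hi hii
          rcases Finset.mem_insert.mp hi with rfl | hi
          · rcases Finset.mem_insert.mp hii with h | h
            · omega
            · exact hh2 h
          · rcases Finset.mem_insert.mp hii with h | h
            · have := Finset.mem_Icc.mp (hS.1 hi); omega
            · exact hS.2 i hi h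
  · intro a ha
    simp only [List.mem_map] at ha
    obtain ⟨b, _, rfl⟩ := ha
    omega

lemma right_phi {n : ℕ} (hn : 2 ≤ n) (S : Finset ℕ) (hS : IndepSet n S) :
    (n ∈ S → n ∉ phi n S ∧ n - 1 ∉ phi n S)
    ∧ (n ∉ S → (n ∈ phi n S ↔ n - 1 ∉ phi n S)) := by
  have hphi : phi n S = toggle n n
      ((List.range (n - 1)).foldl (fun T k => toggle n (k + 1) T) S) := by
    unfold phi
    conv_lhs => rw [show n = (n - 1) + 1 by omega, List.range_succ]
    rw [List.foldl_append]
    simp only [List.foldl_cons, List.foldl_nil]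
    rw [show (n - 1) + 1 = n by omega]
  set T := (List.range (n - 1)).foldl (fun T k => toggle n (k + 1) T) S with hTdef
  have hT : IndepSet n T := indep_foldl n _ S hS
  have hnT : n ∈ T ↔ n ∈ S := by
    apply mem_foldl_of_ne
    intro k hk
    simp only [List.mem_range] at hk
    omega
  have hpred : n - 1 ∈ phi n S ↔ n - 1 ∈ T := by
    rw [hphi]; exact mem_toggle_ne T (by omega)
  constructor
  · intro hnS
    have hnT' : n ∈ T := hnT.mpr hnS
    have hpredT : n - 1 ∉ T := by
      intro h
      have := hT.2 (n - 1) h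
      rw [show n - 1 + 1 = n by omega] at this
      exact this hnT'
    constructor
    · rw [hphi]
      unfold toggle
      simp [hnT', Finset.mem_erase]
    · rw [hpred]; exact hpredT
  · intro hnS
    have hnT' : n ∉ T := fun h => hnS (hnT.mp h)
    rw [hpred, hphi]
    unfold toggle
    rw [if_neg hnT']
    split_ifs with h2
    · simp only [Finset.mem_insert, true_or, true_iff]
      intro hpT
      have := h2.2 (n - 1) (Finset.mem_insert_of_mem hpT)
      rw [show n - 1 + 1 = n by omega] at this
      exact this (Finset.mem_insert_self _ _)
    · constructor
      · intro h; exact absurd h hnT'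
      · intro hpT
        exfalso; apply h2
        constructor
        · intro x hx
          rcases Finset.mem_insert.mp hx with rfl | hx
          · exact Finset.mem_Icc.mpr ⟨by omega, le_refl _⟩
          · exact hT.1 hx
        · intro i hi hii
          rcases Finset.mem_insert.mp hi with rfl | hi
          · rcases Finset.mem_insert.mp hii with h | h
            · omega
            · have := Finset.mem_Icc.mp (hT.1 h); omega
          · rcases Finset.mem_insert.mp hii with h | h
            · exact hpT (by rwa [show i = n - 1 by omega] at hi)
            · exact hT.2 i hi h

/-- For `n ≥ 2`, the statistics `2χ_1 + χ_2` and `χ_{n−1} + 2χ_n` are both 1-mesic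
under the action of `φ` on `I_n`. -/
theorem stmt1 (n : ℕ) (hn : 2 ≤ n) (S : Finset ℕ) (hS : IndepSet n S)
    (m : ℕ) (hm : 1 ≤ m) (hfix : (phi n)^[m] S = S) :
    (∑ i ∈ Finset.range m,
        (2 * (if 1 ∈ (phi n)^[i] S then (1 : ℤ) else 0)
          + (if 2 ∈ (phi n)^[i] S then (1 : ℤ) else 0)) = m)
    ∧ (∑ i ∈ Finset.range m,
        ((if n - 1 ∈ (phi n)^[i] S then (1 : ℤ) else 0)
          + 2 * (if n ∈ (phi n)^[i] S then (1 : ℤ) else 0)) = m) := by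
  have hind : ∀ i, IndepSet n ((phi n)^[i] S) := by
    intro i
    induction i with
    | zero => exact hS
    | succ i ih => rw [Function.iterate_succ_apply']; exact indep_phi n _ ih
  constructor
  · set F : ℕ → ℤ := fun i => if 1 ∈ (phi n)^[i] S then (1 : ℤ) else 0 with hF
    have key : ∀ i ∈ Finset.range m,
        (2 * (if 1 ∈ (phi n)^[i] S then (1 : ℤ) else 0)
          + (if 2 ∈ (phi n)^[i] S then (1 : ℤ) else 0))
        = 1 + (F i - F (i + 1)) := by
      intro i _
      have hT := hind i
      have h1' : F (i + 1) = if (1 ∉ (phi n)^[i] S ∧ 2 ∉ (phi n)^[i] S)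
          then (1 : ℤ) else 0 := by
        simp only [hF, Function.iterate_succ_apply', one_mem_phi hn _ hT]
      rw [h1']
      have h12 : 1 ∈ (phi n)^[i] S → 2 ∉ (phi n)^[i] S := fun h => hT.2 1 h
      by_cases h1 : 1 ∈ (phi n)^[i] S
      · have h2 := h12 h1
        simp only [hF, h1, h2, if_true, not_true, false_and, if_false,
          not_false_iff]
        ring
      · by_cases h2 : 2 ∈ (phi n)^[i] S <;>
          simp only [hF, h1, h2, if_true, if_false, not_true, not_false_iff,
            true_and, and_true, false_and, and_false] <;> ring
    rw [Finset.sum_congr rfl key, Finset.sum_add_distrib, Finset.sum_range_sub' F,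
        Finset.sum_const, Finset.card_range]
    have : F m = F 0 := by simp only [hF, hfix, Function.iterate_zero_apply]; rfl
    rw [this]; ring
  · set G : ℕ → ℤ := fun i =>
      (if n - 1 ∈ (phi n)^[i] S then (1 : ℤ) else 0)
      + (if n ∈ (phi n)^[i] S then (1 : ℤ) else 0) with hG
    have key : ∀ i ∈ Finset.range m,
        ((if n - 1 ∈ (phi n)^[i] S then (1 : ℤ) else 0)
          + 2 * (if n ∈ (phi n)^[i] S then (1 : ℤ) else 0))
        = 1 + (G i - G (i + 1)) := by
      intro i _
      have hT := hind i
      have hr := right_phi hn _ hT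
      have hGsucc : G (i + 1) =
          (if n - 1 ∈ phi n ((phi n)^[i] S) then (1 : ℤ) else 0)
          + (if n ∈ phi n ((phi n)^[i] S) then (1 : ℤ) else 0) := by
        simp only [hG, Function.iterate_succ_apply']
      rw [hGsucc]
      by_cases hB : n ∈ (phi n)^[i] S
      · obtain ⟨hn1, hn2⟩ := hr.1 hB
        have hA : n - 1 ∉ (phi n)^[i] S := by
          intro h
          have := hT.2 (n - 1) h
          rw [show n - 1 + 1 = n by omega] at this
          exact this hB
        simp only [hG, hA, hB, hn1, hn2, if_true, if_false]
        ring
      · have hiff := hr.2 hB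
        by_cases hA' : n ∈ phi n ((phi n)^[i] S)
        · have := hiff.mp hA'
          simp only [hG, hB, hA', this, if_true, if_false]
          ring
        · have : n - 1 ∈ phi n ((phi n)^[i] S) := by
            by_contra h; exact hA' (hiff.mpr h)
          simp only [hG, hB, hA', this, if_true, if_false]
          ring
    rw [Finset.sum_congr rfl key, Finset.sum_add_distrib, Finset.sum_range_sub' G,
        Finset.sum_const, Finset.card_range]
    have : G m = G 0 := by simp only [hG, hfix, Function.iterate_zero_apply]; rfl
    rw [this]; ring
end

section
/- Let w and w' be two Coxeter elements of the toggle group of I_n, i.e., w = τ_{σ(n)} ∘ ⋯ ∘ τ_{σ(1)} and w' = τ_{σ'(n)} ∘ ⋯ ∘ τ_{σ'(1)} for permutations σ, σ' of {1,…,n}. Let f : I_n → ℚ be any linear combination of the indicator statistics, f(S) = ∑_{j∈S} c_j for fixed rational coefficients c_1,…,c_n, and let c ∈ ℚ. Then f is c-mesic under the action of w if and only if f is c-mesic under the action of w'. (Here f is c-mesic under an invertible map u : I_n → I_n means: for every S ∈ I_n and every m ≥ 1 with u^m(S) = S, ∑_{i=0}^{m−1} f(u^i(S)) = c·m.) -/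
/-- The Coxeter element `w = τ_{σ(n)} ∘ ⋯ ∘ τ_{σ(1)}` of the toggle group determined
by a permutation `σ` of `{1,…,n}` (here 0-indexed via `Fin n`). -/
def coxeter (n : ℕ) (σ : Equiv.Perm (Fin n)) (S : Finset ℕ) : Finset ℕ :=
  (List.ofFn fun i : Fin n => (σ i : ℕ) + 1).foldl (fun T k => toggle n k T) S

lemma indep_subset {n : ℕ} {S T : Finset ℕ} (h : T ⊆ S) (hS : IndepSet n S) : IndepSet n T :=
  ⟨h.trans hS.1, fun i hi hc => hS.2 i (h hi) (h hc)⟩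

lemma toggle_indep {n : ℕ} {S : Finset ℕ} (hS : IndepSet n S) (i : ℕ) :
    IndepSet n (toggle n i S) := by
  unfold toggle
  split_ifs with h1 h2
  · exact indep_subset (Finset.erase_subset i S) hS
  · exact h2
  · exact hS

lemma mem_toggle {n : ℕ} {S : Finset ℕ} {i j : ℕ} (hij : j ≠ i) :
    j ∈ toggle n i S ↔ j ∈ S := by
  unfold toggle
  split_ifs with h1 h2 <;> simp [Finset.mem_erase, Finset.mem_insert, hij]

lemma mem_toggle_self {n : ℕ} {S : Finset ℕ} (i : ℕ) :
    i ∈ toggle n i S ↔ i ∉ S ∧ IndepSet n (insert i S) := by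
  unfold toggle
  split_ifs with h1 h2
  · simp [h1, Finset.notMem_erase]
  · simp [h1, h2]
  · simp [h1, h2]

lemma toggle_invol {n : ℕ} {S : Finset ℕ} (hS : IndepSet n S) (i : ℕ) :
    toggle n i (toggle n i S) = S := by
  by_cases h1 : i ∈ S
  · have e1 : toggle n i S = S.erase i := by unfold toggle; rw [if_pos h1]
    rw [e1]
    unfold toggle
    rw [if_neg (Finset.notMem_erase i S), Finset.insert_erase h1, if_pos hS]
  · by_cases h2 : IndepSet n (insert i S)
    · have e1 : toggle n i S = insert i S := by unfold toggle; rw [if_neg h1, if_pos h2]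
      rw [e1]
      unfold toggle
      rw [if_pos (Finset.mem_insert_self i S), Finset.erase_insert h1]
    · have e1 : toggle n i S = S := by unfold toggle; rw [if_neg h1, if_neg h2]
      rw [e1]
      exact e1

lemma indep_insert_iff {n : ℕ} {S : Finset ℕ} (hS : IndepSet n S) (x : ℕ) :
    IndepSet n (insert x S) ↔ (1 ≤ x ∧ x ≤ n ∧ x + 1 ∉ S ∧ ∀ i ∈ S, i + 1 ≠ x) := by
  constructor
  · intro h
    have hx := h.1 (Finset.mem_insert_self x S)
    rw [Finset.mem_Icc] at hx
    refine ⟨hx.1, hx.2, ?_, ?_⟩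
    · intro hc
      exact h.2 x (Finset.mem_insert_self x S) (Finset.mem_insert_of_mem hc)
    · intro i hi hc
      exact h.2 i (Finset.mem_insert_of_mem hi) (hc ▸ Finset.mem_insert_self x S)
  · rintro ⟨h1, h2, h3, h4⟩
    constructor
    · intro j hj
      rcases Finset.mem_insert.mp hj with rfl | hj
      · exact Finset.mem_Icc.mpr ⟨h1, h2⟩
      · exact hS.1 hj
    · intro i hi hc
      rcases Finset.mem_insert.mp hi with rfl | hi
      · rcases Finset.mem_insert.mp hc with h | h
        · omega
        · exact h3 h
      · rcases Finset.mem_insert.mp hc with h | h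
        · exact h4 i hi h
        · exact hS.2 i hi h

/-- The commutation condition `|x - y| ≥ 2`. -/
def Comm2 (x y : ℕ) : Prop := x + 2 ≤ y ∨ y + 2 ≤ x

lemma indep_insert_toggle {n : ℕ} {S : Finset ℕ} (hS : IndepSet n S) {x y : ℕ}
    (hxy : Comm2 x y) :
    IndepSet n (insert x (toggle n y S)) ↔ IndepSet n (insert x S) := by
  rw [indep_insert_iff (toggle_indep hS y) x, indep_insert_iff hS x]
  have hy1 : x + 1 ≠ y := by rcases hxy with h | h <;> omega
  have hy2 : y + 1 ≠ x := by rcases hxy with h | h <;> omega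
  refine and_congr Iff.rfl (and_congr Iff.rfl (and_congr (not_congr (mem_toggle hy1)) ?_))
  constructor
  · intro h i hi
    by_cases hiy : i = y
    · subst hiy; exact hy2
    · exact h i ((mem_toggle hiy).mpr hi)
  · intro h i hi
    by_cases hiy : i = y
    · subst hiy; exact hy2
    · exact h i ((mem_toggle hiy).mp hi)

lemma comm2_symm {x y : ℕ} (h : Comm2 x y) : Comm2 y x := h.symm

lemma toggle_comm {n : ℕ} {S : Finset ℕ} (hS : IndepSet n S) {x y : ℕ} (hxy : Comm2 x y) :
    toggle n x (toggle n y S) = toggle n y (toggle n x S) := by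
  have hxney : x ≠ y := by rcases hxy with h | h <;> omega
  ext j
  by_cases hjx : j = x
  · subst hjx
    rw [mem_toggle_self, mem_toggle hxney, indep_insert_toggle hS hxy,
      mem_toggle hxney, mem_toggle_self]
  · by_cases hjy : j = y
    · subst hjy
      rw [mem_toggle hjx, mem_toggle_self, mem_toggle_self,
        mem_toggle (Ne.symm hxney), indep_insert_toggle hS (comm2_symm hxy)]
    · rw [mem_toggle hjx, mem_toggle hjy, mem_toggle hjy, mem_toggle hjx]

/-- Action of a word (list of vertices) by successive toggles, leftmost first. -/
def Gw (n : ℕ) (l : List ℕ) (S : Finset ℕ) : Finset ℕ :=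
  l.foldl (fun T k => toggle n k T) S

lemma Gw_nil (n : ℕ) (S : Finset ℕ) : Gw n [] S = S := rfl

lemma Gw_cons (n a : ℕ) (l : List ℕ) (S : Finset ℕ) :
    Gw n (a :: l) S = Gw n l (toggle n a S) := rfl

lemma Gw_append (n : ℕ) (l l' : List ℕ) (S : Finset ℕ) :
    Gw n (l ++ l') S = Gw n l' (Gw n l S) := List.foldl_append

lemma Gw_indep {n : ℕ} (l : List ℕ) {S : Finset ℕ} (hS : IndepSet n S) :
    IndepSet n (Gw n l S) := by
  induction l generalizing S with
  | nil => exact hS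
  | cons a l ih => exact ih (toggle_indep hS a)

lemma Gw_mem {n j : ℕ} {l : List ℕ} (hj : j ∉ l) (S : Finset ℕ) :
    j ∈ Gw n l S ↔ j ∈ S := by
  induction l generalizing S with
  | nil => exact Iff.rfl
  | cons a l ih =>
    have hja : j ≠ a := fun h => hj (by simp [h])
    rw [Gw_cons, ih (fun h => hj (List.mem_cons_of_mem a h)), mem_toggle hja]

lemma Gw_iter_indep {n : ℕ} (l : List ℕ) {S : Finset ℕ} (hS : IndepSet n S) (m : ℕ) :
    IndepSet n ((Gw n l)^[m] S) := by
  induction m with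
  | zero => exact hS
  | succ m ih => rw [Function.iterate_succ_apply']; exact Gw_indep l ih

/-- The homomesy property of the statistic `S ↦ ∑_{j∈S} cf j` for the word `l`. -/
def Qp (n : ℕ) (cf : ℕ → ℚ) (c : ℚ) (l : List ℕ) : Prop :=
  ∀ S : Finset ℕ, IndepSet n S → ∀ m : ℕ, 1 ≤ m → (Gw n l)^[m] S = S →
    ∑ i ∈ Finset.range m, ∑ j ∈ (Gw n l)^[i] S, cf j = c * m

lemma Gw_iter_congr {n : ℕ} {l l' : List ℕ}
    (h : ∀ S : Finset ℕ, IndepSet n S → Gw n l S = Gw n l' S)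
    {S : Finset ℕ} (hS : IndepSet n S) (m : ℕ) :
    (Gw n l)^[m] S = (Gw n l')^[m] S := by
  induction m with
  | zero => rfl
  | succ m ih =>
    rw [Function.iterate_succ_apply', Function.iterate_succ_apply', ih]
    exact h _ (Gw_iter_indep l' hS m)

lemma Qp_congr {n : ℕ} {cf : ℕ → ℚ} {c : ℚ} {l l' : List ℕ}
    (h : ∀ S : Finset ℕ, IndepSet n S → Gw n l S = Gw n l' S) :
    Qp n cf c l ↔ Qp n cf c l' := by
  have key : ∀ S : Finset ℕ, IndepSet n S → ∀ m, (Gw n l)^[m] S = (Gw n l')^[m] S :=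
    fun S hS m => Gw_iter_congr h hS m
  constructor <;> intro H S hS m hm hper
  · rw [← key S hS m] at hper
    rw [← H S hS m hm hper]
    exact Finset.sum_congr rfl fun i _ => by rw [key S hS i]
  · rw [key S hS m] at hper
    rw [← H S hS m hm hper]
    exact Finset.sum_congr rfl fun i _ => by rw [key S hS i]

lemma sum_split_at {cf : ℕ → ℚ} (a : ℕ) (T : Finset ℕ) :
    ∑ j ∈ T, cf j = (∑ j ∈ T.erase a, cf j) + (if a ∈ T then cf a else 0) := by
  by_cases h : a ∈ T
  · rw [if_pos h, Finset.sum_erase_add T cf h]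
  · rw [if_neg h, Finset.erase_eq_of_notMem h, add_zero]

lemma erase_toggle {n a : ℕ} (S : Finset ℕ) : (toggle n a S).erase a = S.erase a := by
  ext j
  simp only [Finset.mem_erase]
  constructor
  · rintro ⟨hne, hm⟩; exact ⟨hne, (mem_toggle hne).mp hm⟩
  · rintro ⟨hne, hm⟩; exact ⟨hne, (mem_toggle hne).mpr hm⟩

section Rot
variable {n : ℕ} {cf : ℕ → ℚ} {c : ℚ} {a : ℕ} {u : List ℕ}

lemma rot_conj (ha : a ∉ u) (S : Finset ℕ) (m : ℕ) :
    (Gw n (u ++ [a]))^[m] (toggle n a S) = toggle n a ((Gw n (a :: u))^[m] S) := by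
  induction m with
  | zero => rfl
  | succ m ih =>
    rw [Function.iterate_succ_apply', Function.iterate_succ_apply', ih]
    rw [Gw_append, Gw_cons]
    rfl

lemma rot_sum (ha : a ∉ u) {S : Finset ℕ} (hS : IndepSet n S) {m : ℕ}
    (hper : (Gw n (a :: u))^[m] S = S) :
    ∑ i ∈ Finset.range m, ∑ j ∈ (Gw n (u ++ [a]))^[i] (toggle n a S), cf j =
    ∑ i ∈ Finset.range m, ∑ j ∈ (Gw n (a :: u))^[i] S, cf j := by
  set w := Gw n (a :: u) with hw
  set g : ℕ → ℚ := fun i => if a ∈ w^[i] S then cf a else 0 with hg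
  have step : ∀ i : ℕ, ∑ j ∈ (Gw n (u ++ [a]))^[i] (toggle n a S), cf j
      = (∑ j ∈ w^[i] S, cf j) - g i + g (i + 1) := by
    intro i
    rw [rot_conj ha]
    rw [sum_split_at a (toggle n a (w^[i] S)), erase_toggle]
    rw [sum_split_at a (w^[i] S)]
    have hmem : (a ∈ toggle n a (w^[i] S)) ↔ a ∈ w^[i+1] S := by
      rw [Function.iterate_succ_apply', hw, Gw_cons, Gw_mem ha]
    simp only [hg]
    rw [if_congr hmem rfl rfl]
    ring
  rw [Finset.sum_congr rfl fun i _ => step i]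
  have hcyc : ∑ i ∈ Finset.range m, g (i + 1) = ∑ i ∈ Finset.range m, g i := by
    have h1 := Finset.sum_range_succ' g m
    have h2 := Finset.sum_range_succ g m
    have hgm : g m = g 0 := by simp only [hg]; rw [hper]; rfl
    rw [h2, hgm] at h1
    linarith
  rw [Finset.sum_add_distrib, Finset.sum_sub_distrib, hcyc]
  ring

lemma Qp_rot (ha : a ∉ u) : Qp n cf c (a :: u) ↔ Qp n cf c (u ++ [a]) := by
  constructor
  · intro H T hT m hm hper
    set S := toggle n a T with hSdef
    have hS : IndepSet n S := toggle_indep hT a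
    have hTS : toggle n a S = T := toggle_invol hT a
    have hper' : (Gw n (a :: u))^[m] S = S := by
      have h1 := rot_conj (n := n) ha S m
      rw [hTS, hper] at h1
      have h2 : toggle n a T = toggle n a (toggle n a ((Gw n (a :: u))^[m] S)) := by rw [← h1]
      rw [toggle_invol (Gw_iter_indep _ hS m) a] at h2
      rw [hSdef] at h2 ⊢
      exact h2.symm
    have := rot_sum (cf := cf) ha hS hper'
    rw [hTS] at this
    rw [this]
    exact H S hS m hm hper'
  · intro H S hS m hm hper
    set T := toggle n a S with hTdef
    have hT : IndepSet n T := toggle_indep hS a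
    have hper' : (Gw n (u ++ [a]))^[m] T = T := by
      rw [hTdef, rot_conj ha, hper]
    rw [← rot_sum (cf := cf) ha hS hper]
    exact H T hT m hm hper'

end Rot

section Words
variable {n : ℕ} {cf : ℕ → ℚ} {c : ℚ}

lemma Gw_swap {x y : ℕ} (hxy : Comm2 x y) (q : List ℕ) {S : Finset ℕ} (hS : IndepSet n S) :
    Gw n (x :: y :: q) S = Gw n (y :: x :: q) S := by
  rw [Gw_cons, Gw_cons, Gw_cons, Gw_cons, toggle_comm hS (comm2_symm hxy)]

lemma Gw_moveHead {x : ℕ} {s : List ℕ} (h : ∀ y ∈ s, Comm2 x y) (q : List ℕ)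
    {S : Finset ℕ} (hS : IndepSet n S) :
    Gw n (x :: (s ++ q)) S = Gw n (s ++ x :: q) S := by
  induction s generalizing S with
  | nil => rfl
  | cons y s ih =>
    have h1 : Comm2 x y := h y List.mem_cons_self
    calc Gw n (x :: (y :: s ++ q)) S = Gw n (y :: x :: (s ++ q)) S := Gw_swap h1 _ hS
    _ = Gw n (x :: (s ++ q)) (toggle n y S) := rfl
    _ = Gw n (s ++ x :: q) (toggle n y S) :=
        ih (fun z hz => h z (List.mem_cons_of_mem y hz)) (toggle_indep hS y)
    _ = Gw n (y :: s ++ x :: q) S := rfl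

lemma Gw_blocks {b s : List ℕ} (h : ∀ x ∈ b, ∀ y ∈ s, Comm2 x y) (q : List ℕ)
    {S : Finset ℕ} (hS : IndepSet n S) :
    Gw n (b ++ s ++ q) S = Gw n (s ++ b ++ q) S := by
  induction b generalizing S with
  | nil => simp
  | cons x b ih =>
    have e1 : (x :: b) ++ s ++ q = x :: (b ++ s ++ q) := by simp
    have e2 : s ++ (x :: b) ++ q = s ++ x :: (b ++ q) := by simp
    rw [e1, e2, Gw_cons, ih (fun z hz => h z (List.mem_cons_of_mem x hz)) (toggle_indep hS x)]
    have := Gw_moveHead (n := n) (h x List.mem_cons_self) (b ++ q) hS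
    rw [Gw_cons] at this
    rw [List.append_assoc]
    exact this

lemma Qp_shift : ∀ (u v : List ℕ), (u ++ v).Nodup →
    (Qp n cf c (u ++ v) ↔ Qp n cf c (v ++ u))
  | [], v, _ => by simp
  | a :: u, v, h => by
    have ha : a ∉ u ++ v := (List.nodup_cons.mp h).1
    have h1 : Qp n cf c (a :: (u ++ v)) ↔ Qp n cf c ((u ++ v) ++ [a]) := Qp_rot ha
    have hnd : (u ++ (v ++ [a])).Nodup := by
      have hp : (u ++ (v ++ [a])).Perm (a :: (u ++ v)) := by
        rw [← List.append_assoc]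
        exact List.perm_append_singleton a (u ++ v)
      exact hp.symm.nodup h
    have h2 := Qp_shift u (v ++ [a]) hnd
    rw [List.append_assoc] at h1
    have e : (v ++ [a]) ++ u = v ++ a :: u := by simp
    rw [e] at h2
    exact (h1.trans h2)

lemma Qp_main (hn' : True) : ∀ (j : ℕ), j ≤ n → ∀ u : List ℕ, u.Perm (List.range' 1 j) →
    (Qp n cf c (u ++ List.range' (j + 1) (n - j)) ↔ Qp n cf c (List.range' 1 n)) := by
  intro j
  induction j with
  | zero =>
    intro _ u hu
    rw [List.perm_nil.mp hu]
    simp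
  | succ j IH =>
    intro hj u hu
    have hmem : j + 1 ∈ u := hu.mem_iff.mpr (by
      rw [List.mem_range']
      exact ⟨j, by omega, by omega⟩)
    obtain ⟨u₁, u₂, rfl⟩ := List.append_of_mem hmem
    have hnd : (u₁ ++ (j + 1) :: u₂).Nodup := hu.symm.nodup (List.nodup_range' (s := 1) (n := j+1))
    -- u₂ ++ u₁ is a permutation of range' 1 j
    have hperm : (u₂ ++ u₁).Perm (List.range' 1 j) := by
      have h1 : ((j+1) :: (u₁ ++ u₂)).Perm ((j+1) :: List.range' 1 j) := by
        refine List.Perm.trans ?_ (hu.trans ?_)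
        · exact (List.perm_middle).symm
        · have e : List.range' 1 (j+1) = List.range' 1 j ++ [j+1] := by
            rw [List.range'_concat]; ring_nf
          rw [e]
          exact (List.perm_append_singleton (j+1) (List.range' 1 j))
      have h2 : (u₁ ++ u₂).Perm (List.range' 1 j) := (List.Perm.cons_inv h1)
      exact (List.perm_append_comm).trans h2
    set s := List.range' (j + 1 + 1) (n - (j + 1)) with hs
    have hcomm : ∀ x ∈ u₂, ∀ y ∈ s, Comm2 x y := by
      intro x hx y hy
      have hx1 : x ∈ List.range' 1 (j + 1) := hu.mem_iff.mp (by simp [hx])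
      rw [List.mem_range'_1] at hx1
      have hxne : x ≠ j + 1 := by
        intro h
        subst h
        exact (List.nodup_cons.mp (List.nodup_append.mp hnd).2.1).1 hx
      rw [hs, List.mem_range'_1] at hy
      left
      omega
    have hfull : ((u₁ ++ (j + 1) :: u₂) ++ s).Perm (List.range' 1 n) := by
      have h1 : List.range' 1 (j + 1) ++ s = List.range' 1 n := by
        have := List.range'_append (s := 1) (m := j + 1) (n := n - (j + 1)) (step := 1)
        simp only [one_mul] at this
        rw [show (1 + (j + 1)) = j + 1 + 1 from by omega] at this
        rw [hs, this, show j + 1 + (n - (j + 1)) = n from by omega]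
      exact (hu.append_right s).trans (h1 ▸ List.Perm.refl _)
    have FN : ((u₁ ++ (j + 1) :: u₂) ++ s).Nodup :=
      hfull.symm.nodup (List.nodup_range' (s := 1) (n := n))
    have e1 : (u₁ ++ (j + 1) :: u₂) ++ s = u₁ ++ ((j + 1) :: (u₂ ++ s)) := by simp
    have ndB : (u₁ ++ ((j + 1) :: (u₂ ++ s))).Nodup := e1 ▸ FN
    have hB : Qp n cf c ((u₁ ++ (j + 1) :: u₂) ++ s) ↔
        Qp n cf c (((j + 1) :: (u₂ ++ s)) ++ u₁) := by
      rw [e1]; exact Qp_shift u₁ _ ndB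
    have hC : Qp n cf c (((j + 1) :: (u₂ ++ s)) ++ u₁) ↔
        Qp n cf c (((j + 1) :: s) ++ (u₂ ++ u₁)) := by
      refine Qp_congr ?_
      intro S hS
      rw [show ((j + 1) :: (u₂ ++ s)) ++ u₁ = (j + 1) :: ((u₂ ++ s) ++ u₁) from by simp,
        Gw_cons]
      rw [show ((j + 1) :: s) ++ (u₂ ++ u₁) = (j + 1) :: (s ++ (u₂ ++ u₁)) from by simp,
        Gw_cons]
      rw [show s ++ (u₂ ++ u₁) = (s ++ u₂) ++ u₁ from by simp]
      exact Gw_blocks hcomm u₁ (toggle_indep hS (j + 1))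
    have ndD : (((j + 1) :: s) ++ (u₂ ++ u₁)).Nodup := by
      refine List.Perm.nodup ?_ ndB
      refine List.perm_iff_count.mpr ?_
      intro a
      simp [List.count_append, List.count_cons]
      ring
    have hD : Qp n cf c (((j + 1) :: s) ++ (u₂ ++ u₁)) ↔
        Qp n cf c ((u₂ ++ u₁) ++ ((j + 1) :: s)) := Qp_shift _ _ ndD
    have e3 : (j + 1) :: s = List.range' (j + 1) (n - j) := by
      rw [hs, show n - j = (n - (j + 1)) + 1 from by omega, List.range'_succ]
    have hE := IH (by omega) (u₂ ++ u₁) hperm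
    rw [← e3] at hE
    exact hB.trans (hC.trans (hD.trans hE))

lemma word_perm {τ : Equiv.Perm (Fin n)} :
    (List.ofFn fun i : Fin n => (τ i : ℕ) + 1).Perm (List.range' 1 n) := by
  refine List.perm_of_nodup_nodup_toFinset_eq ?_ (List.nodup_range' (s := 1) (n := n)) ?_
  · exact List.nodup_ofFn.mpr (fun i j h => τ.injective (Fin.val_injective (by omega)))
  · ext x
    simp only [List.mem_toFinset, List.mem_ofFn, Set.mem_range, List.mem_range'_1]
    constructor
    · rintro ⟨i, rfl⟩
      have := (τ i).isLt
      omega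
    · rintro ⟨h1, h2⟩
      refine ⟨τ⁻¹ ⟨x - 1, by omega⟩, ?_⟩
      rw [← Equiv.Perm.mul_apply, mul_inv_cancel, Equiv.Perm.one_apply]
      simp
      omega

lemma Qp_coxeter (τ : Equiv.Perm (Fin n)) :
    Qp n cf c (List.ofFn fun i : Fin n => (τ i : ℕ) + 1) ↔ Qp n cf c (List.range' 1 n) := by
  have h := Qp_main (n := n) (cf := cf) (c := c) trivial n le_rfl
    (List.ofFn fun i : Fin n => (τ i : ℕ) + 1) word_perm
  simpa using h

end Words

/-- A statistic `f(S) = ∑_{j ∈ S} c_j` which is a linear combination of the indicator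
functions is `c`-mesic under one Coxeter element of the toggle group of `I_n` if and
only if it is `c`-mesic under any other. -/
theorem stmt3 (n : ℕ) (hn : 2 ≤ n) (σ σ' : Equiv.Perm (Fin n))
    (cf : ℕ → ℚ) (c : ℚ) :
    (∀ S : Finset ℕ, IndepSet n S → ∀ m : ℕ, 1 ≤ m → (coxeter n σ)^[m] S = S →
        ∑ i ∈ Finset.range m, ∑ j ∈ (coxeter n σ)^[i] S, cf j = c * m) ↔
    (∀ S : Finset ℕ, IndepSet n S → ∀ m : ℕ, 1 ≤ m → (coxeter n σ')^[m] S = S →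
        ∑ i ∈ Finset.range m, ∑ j ∈ (coxeter n σ')^[i] S, cf j = c * m) := by
  exact (Qp_coxeter σ).trans (Qp_coxeter σ').symm
end

section
/- Suppose n ≥ 3. For i, j ∈ {1,…,n}, the order of the bijection τ_i ∘ τ_j of the finite set I_n is: 1 if i = j; 2 if |i − j| ≥ 2; and 6 if |i − j| = 1. -/
namespace Stmt5Aux

lemma indep_mono {n : ℕ} {S T : Finset ℕ} (h : S ⊆ T) (hT : IndepSet n T) : IndepSet n S :=
  ⟨h.trans hT.1, fun i hi hi1 => hT.2 i (h hi) (h hi1)⟩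

lemma indep_insert {n i : ℕ} (hi1 : 1 ≤ i) (hin : i ≤ n) {S : Finset ℕ} (hS : IndepSet n S) :
    IndepSet n (insert i S) ↔ (i - 1 ∉ S ∧ i + 1 ∉ S) := by
  constructor
  · intro h
    refine ⟨fun hm => ?_, fun hm => ?_⟩
    · have h' : (i - 1) + 1 ∈ insert i S := by
        have : i - 1 + 1 = i := by omega
        rw [this]; exact Finset.mem_insert_self _ _
      exact h.2 (i - 1) (Finset.mem_insert_of_mem hm) h'
    · exact h.2 i (Finset.mem_insert_self _ _) (Finset.mem_insert_of_mem hm)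
  · rintro ⟨h1, h2⟩
    refine ⟨fun x hx => ?_, fun m hm hm1 => ?_⟩
    · rcases Finset.mem_insert.1 hx with rfl | hx
      · exact Finset.mem_Icc.2 ⟨hi1, hin⟩
      · exact hS.1 hx
    · rcases Finset.mem_insert.1 hm with rfl | hm
      · rcases Finset.mem_insert.1 hm1 with h | h
        · omega
        · exact h2 h
      · rcases Finset.mem_insert.1 hm1 with h | h
        · have hmi : m = i - 1 := by omega
          exact h1 (hmi ▸ hm)
        · exact hS.2 m hm h

lemma toggle_mem {n i : ℕ} {S : Finset ℕ} (h : i ∈ S) : toggle n i S = S.erase i := by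
  simp [toggle, h]

lemma toggle_ins {n i : ℕ} (hi1 : 1 ≤ i) (hin : i ≤ n) {S : Finset ℕ} (hS : IndepSet n S)
    (h : i ∉ S) (h1 : i - 1 ∉ S) (h2 : i + 1 ∉ S) : toggle n i S = insert i S := by
  unfold toggle
  rw [if_neg h, if_pos ((indep_insert hi1 hin hS).2 ⟨h1, h2⟩)]

lemma not_indep_insert {n i : ℕ} (hi1 : 1 ≤ i) {S : Finset ℕ}
    (hb : i - 1 ∈ S ∨ i + 1 ∈ S) : ¬ IndepSet n (insert i S) := by
  intro hI
  rcases hb with hb | hb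
  · refine hI.2 (i - 1) (Finset.mem_insert_of_mem hb) ?_
    have : i - 1 + 1 = i := by omega
    rw [this]; exact Finset.mem_insert_self _ _
  · exact hI.2 i (Finset.mem_insert_self _ _) (Finset.mem_insert_of_mem hb)

lemma toggle_stuck {n i : ℕ} (hi1 : 1 ≤ i) {S : Finset ℕ} (h : i ∉ S)
    (hb : i - 1 ∈ S ∨ i + 1 ∈ S) : toggle n i S = S := by
  unfold toggle
  rw [if_neg h, if_neg (not_indep_insert hi1 hb)]

lemma indep_toggle {n i : ℕ} {S : Finset ℕ} (hS : IndepSet n S) :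
    IndepSet n (toggle n i S) := by
  unfold toggle
  split
  · exact indep_mono (Finset.erase_subset _ _) hS
  · split
    · assumption
    · exact hS

lemma toggle_toggle {n i : ℕ} (hi1 : 1 ≤ i) (hin : i ≤ n) {S : Finset ℕ} (hS : IndepSet n S) :
    toggle n i (toggle n i S) = S := by
  by_cases h : i ∈ S
  · rw [toggle_mem h]
    have h1 : i - 1 ∉ S.erase i := fun hm =>
      hS.2 (i - 1) (Finset.mem_of_mem_erase hm) (by rwa [Nat.sub_add_cancel hi1])
    have h2 : i + 1 ∉ S.erase i := fun hm => hS.2 i h (Finset.mem_of_mem_erase hm)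
    rw [toggle_ins hi1 hin (indep_mono (Finset.erase_subset _ _) hS)
      (Finset.notMem_erase _ _) h1 h2, Finset.insert_erase h]
  · by_cases hI : IndepSet n (insert i S)
    · have e1 : toggle n i S = insert i S := by unfold toggle; rw [if_neg h, if_pos hI]
      rw [e1, toggle_mem (Finset.mem_insert_self _ _), Finset.erase_insert h]
    · have e1 : toggle n i S = S := by unfold toggle; rw [if_neg h, if_neg hI]
      rw [e1, e1]

/-! ### Commutation for distant toggles -/

lemma comm_aux {n i j : ℕ} (hi1 : 1 ≤ i) (hin : i ≤ n) (hj1 : 1 ≤ j) (hjn : j ≤ n)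
    (hsep : i + 2 ≤ j ∨ j + 2 ≤ i) {S : Finset ℕ} (hS : IndepSet n S)
    (hi : i ∈ S) (hj : j ∉ S) :
    toggle n i (toggle n j S) = toggle n j (toggle n i S) := by
  have hij : i ≠ j := by omega
  rw [toggle_mem hi]
  by_cases hb : j - 1 ∈ S ∨ j + 1 ∈ S
  · rw [toggle_stuck hj1 hj hb, toggle_mem hi]
    have hb' : j - 1 ∈ S.erase i ∨ j + 1 ∈ S.erase i := by
      rcases hb with hb | hb
      · exact Or.inl (Finset.mem_erase.2 ⟨by omega, hb⟩)
      · exact Or.inr (Finset.mem_erase.2 ⟨by omega, hb⟩)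
    rw [toggle_stuck hj1 (fun hm => hj (Finset.mem_of_mem_erase hm)) hb']
  · push_neg at hb
    rw [toggle_ins hj1 hjn hS hj hb.1 hb.2]
    have h1 : j - 1 ∉ S.erase i := fun hm => hb.1 (Finset.mem_of_mem_erase hm)
    have h2 : j + 1 ∉ S.erase i := fun hm => hb.2 (Finset.mem_of_mem_erase hm)
    rw [toggle_ins hj1 hjn (indep_mono (Finset.erase_subset _ _) hS)
      (fun hm => hj (Finset.mem_of_mem_erase hm)) h1 h2,
      toggle_mem (Finset.mem_insert_of_mem hi),
      Finset.erase_insert_of_ne hij.symm]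

lemma comm {n i j : ℕ} (hi1 : 1 ≤ i) (hin : i ≤ n) (hj1 : 1 ≤ j) (hjn : j ≤ n)
    (hsep : i + 2 ≤ j ∨ j + 2 ≤ i) {S : Finset ℕ} (hS : IndepSet n S) :
    toggle n i (toggle n j S) = toggle n j (toggle n i S) := by
  have hij : i ≠ j := by omega
  by_cases hi : i ∈ S <;> by_cases hj : j ∈ S
  · rw [toggle_mem hj, toggle_mem hi,
      toggle_mem (Finset.mem_erase.2 ⟨hij, hi⟩),
      toggle_mem (Finset.mem_erase.2 ⟨hij.symm, hj⟩), Finset.erase_right_comm]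
  · exact comm_aux hi1 hin hj1 hjn hsep hS hi hj
  · exact (comm_aux hj1 hjn hi1 hin hsep.symm hS hj hi).symm
  · by_cases hbj : j - 1 ∈ S ∨ j + 1 ∈ S <;> by_cases hbi : i - 1 ∈ S ∨ i + 1 ∈ S
    · rw [toggle_stuck hj1 hj hbj, toggle_stuck hi1 hi hbi, toggle_stuck hj1 hj hbj]
    · push_neg at hbi
      rw [toggle_stuck hj1 hj hbj, toggle_ins hi1 hin hS hi hbi.1 hbi.2]
      have hj' : j ∉ insert i S := by
        simp only [Finset.mem_insert]; push_neg; exact ⟨hij.symm, hj⟩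
      have hbj' : j - 1 ∈ insert i S ∨ j + 1 ∈ insert i S := by
        rcases hbj with hb | hb
        · exact Or.inl (Finset.mem_insert_of_mem hb)
        · exact Or.inr (Finset.mem_insert_of_mem hb)
      rw [toggle_stuck hj1 hj' hbj']
    · push_neg at hbj
      rw [toggle_stuck hi1 hi hbi, toggle_ins hj1 hjn hS hj hbj.1 hbj.2]
      have hi' : i ∉ insert j S := by
        simp only [Finset.mem_insert]; push_neg; exact ⟨hij, hi⟩
      have hbi' : i - 1 ∈ insert j S ∨ i + 1 ∈ insert j S := by
        rcases hbi with hb | hb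
        · exact Or.inl (Finset.mem_insert_of_mem hb)
        · exact Or.inr (Finset.mem_insert_of_mem hb)
      rw [toggle_stuck hi1 hi' hbi']
    · push_neg at hbj; push_neg at hbi
      rw [toggle_ins hj1 hjn hS hj hbj.1 hbj.2, toggle_ins hi1 hin hS hi hbi.1 hbi.2]
      have hiS : IndepSet n (insert i S) := (indep_insert hi1 hin hS).2 ⟨hbi.1, hbi.2⟩
      have hjS : IndepSet n (insert j S) := (indep_insert hj1 hjn hS).2 ⟨hbj.1, hbj.2⟩
      have hi' : i ∉ insert j S := by
        simp only [Finset.mem_insert]; push_neg; exact ⟨hij, hi⟩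
      have hj' : j ∉ insert i S := by
        simp only [Finset.mem_insert]; push_neg; exact ⟨hij.symm, hj⟩
      have e1 : i - 1 ∉ insert j S := by
        simp only [Finset.mem_insert]; push_neg; exact ⟨by omega, hbi.1⟩
      have e2 : i + 1 ∉ insert j S := by
        simp only [Finset.mem_insert]; push_neg; exact ⟨by omega, hbi.2⟩
      have e3 : j - 1 ∉ insert i S := by
        simp only [Finset.mem_insert]; push_neg; exact ⟨by omega, hbj.1⟩
      have e4 : j + 1 ∉ insert i S := by
        simp only [Finset.mem_insert]; push_neg; exact ⟨by omega, hbj.2⟩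
      rw [toggle_ins hi1 hin hjS hi' e1 e2, toggle_ins hj1 hjn hiS hj' e3 e4,
        Finset.insert_comm]

/-! ### The adjacent case: toggle table -/

section Table

variable {n d : ℕ} (hd1 : 1 ≤ d) (hdn : d + 1 ≤ n) {T : Finset ℕ}
  (hT : IndepSet n T) (hd : d ∉ T) (hd' : d + 1 ∉ T)

include hd1 hdn hT hd hd' in
lemma t1 (hp : d - 1 ∉ T) : toggle n d T = insert d T :=
  toggle_ins hd1 (by omega) hT hd hp hd'

include hd1 hd in
lemma t2 (hp : d - 1 ∈ T) : toggle n d T = T :=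
  toggle_stuck hd1 hd (Or.inl hp)

include hd in
lemma t3 : toggle n d (insert d T) = T := by
  rw [toggle_mem (Finset.mem_insert_self _ _), Finset.erase_insert hd]

include hd1 hd in
lemma t4 : toggle n d (insert (d + 1) T) = insert (d + 1) T := by
  refine toggle_stuck hd1 ?_ (Or.inr (Finset.mem_insert_self _ _))
  simp only [Finset.mem_insert]; push_neg; exact ⟨by omega, hd⟩

include hd1 hdn hT hd hd' in
lemma t5 (hq : d + 2 ∉ T) : toggle n (d + 1) T = insert (d + 1) T := by
  refine toggle_ins (by omega) hdn hT hd' ?_ hq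
  simpa using hd

include hd' in
lemma t6 (hq : d + 2 ∈ T) : toggle n (d + 1) T = T :=
  toggle_stuck (by omega) hd' (Or.inr hq)

include hd' in
lemma t7 : toggle n (d + 1) (insert (d + 1) T) = T := by
  rw [toggle_mem (Finset.mem_insert_self _ _), Finset.erase_insert hd']

include hd' in
lemma t8 : toggle n (d + 1) (insert d T) = insert d T := by
  refine toggle_stuck (by omega) ?_ (Or.inl (by simpa using Finset.mem_insert_self d T))
  simp only [Finset.mem_insert]; push_neg; exact ⟨by omega, hd'⟩

end Table

lemma iter_two {α : Type*} {f : α → α} {S : α} : f^[2] S = f (f S) := by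
  rw [show (2 : ℕ) = 1 + 1 from rfl]
  simp only [Function.iterate_add_apply, Function.iterate_one]

lemma iter_three {α : Type*} {f : α → α} {S : α} : f^[3] S = f (f (f S)) := by
  rw [show (3 : ℕ) = 1 + 1 + 1 from rfl]
  simp only [Function.iterate_add_apply, Function.iterate_one]

lemma per2_iter6 {α : Type*} {f : α → α} {S : α} (h : f (f S) = S) : f^[6] S = S := by
  rw [show (6 : ℕ) = 2 * 3 from rfl, Function.iterate_mul]
  exact Function.iterate_fixed (by rw [iter_two]; exact h) 3

lemma per3_iter6 {α : Type*} {f : α → α} {S : α} (h : f (f (f S)) = S) : f^[6] S = S := by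
  rw [show (6 : ℕ) = 3 * 2 from rfl, Function.iterate_mul]
  exact Function.iterate_fixed (by rw [iter_three]; exact h) 2

section Per6

variable {n d : ℕ}

lemma per6_f1 (hd1 : 1 ≤ d) (hdn : d + 1 ≤ n) (S : Finset ℕ) (hS : IndepSet n S) :
    (toggle n (d + 1) ∘ toggle n d)^[6] S = S := by
  set f := toggle n (d + 1) ∘ toggle n d with hf
  have hfa : ∀ X, f X = toggle n (d + 1) (toggle n d X) := fun X => rfl
  by_cases ha : d ∈ S
  · -- S = insert d T
    have hb : d + 1 ∉ S := hS.2 d ha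
    have hp : d - 1 ∉ S := fun h => hS.2 (d - 1) h (by rwa [Nat.sub_add_cancel hd1])
    set T := S.erase d with hTdef
    have hT : IndepSet n T := indep_mono (Finset.erase_subset _ _) hS
    have hdT : d ∉ T := Finset.notMem_erase _ _
    have hd'T : d + 1 ∉ T := fun h => hb (Finset.mem_of_mem_erase h)
    have hpT : d - 1 ∉ T := fun h => hp (Finset.mem_of_mem_erase h)
    have hSeq : S = insert d T := (Finset.insert_erase ha).symm
    rw [hSeq]
    by_cases hq : d + 2 ∈ T
    · -- period 2 : B ↦ T ↦ B
      refine per2_iter6 ?_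
      simp only [hfa]
      rw [t3 hdT, t6 hd'T hq, t1 hd1 hdn hT hdT hd'T hpT, t8 hd'T]
    · -- period 3 : B ↦ C ↦ T ↦ B
      refine per3_iter6 ?_
      simp only [hfa]
      rw [t3 hdT, t5 hd1 hdn hT hdT hd'T hq, t4 hd1 hdT, t7 hd'T,
        t1 hd1 hdn hT hdT hd'T hpT, t8 hd'T]
  · by_cases hb : d + 1 ∈ S
    · -- S = insert (d+1) T
      have hq : d + 2 ∉ S := hS.2 (d + 1) hb
      set T := S.erase (d + 1) with hTdef
      have hT : IndepSet n T := indep_mono (Finset.erase_subset _ _) hS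
      have hdT : d ∉ T := fun h => ha (Finset.mem_of_mem_erase h)
      have hd'T : d + 1 ∉ T := Finset.notMem_erase _ _
      have hqT : d + 2 ∉ T := fun h => hq (Finset.mem_of_mem_erase h)
      have hSeq : S = insert (d + 1) T := (Finset.insert_erase hb).symm
      rw [hSeq]
      by_cases hp : d - 1 ∈ T
      · -- period 2 : C ↦ T ↦ C
        refine per2_iter6 ?_
        simp only [hfa]
        rw [t4 hd1 hdT, t7 hd'T, t2 hd1 hdT hp, t5 hd1 hdn hT hdT hd'T hqT]
      · -- period 3 : C ↦ T ↦ B ↦ C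
        refine per3_iter6 ?_
        simp only [hfa]
        rw [t4 hd1 hdT, t7 hd'T, t1 hd1 hdn hT hdT hd'T hp, t8 hd'T,
          t3 hdT, t5 hd1 hdn hT hdT hd'T hqT]
    · -- S = T
      by_cases hp : d - 1 ∈ S
      · by_cases hq : d + 2 ∈ S
        · exact Function.iterate_fixed
            (by rw [hfa, t2 hd1 ha hp, t6 hb hq]) 6
        · refine per2_iter6 ?_
          simp only [hfa]
          rw [t2 hd1 ha hp, t5 hd1 hdn hS ha hb hq, t4 hd1 ha, t7 hb]
      · by_cases hq : d + 2 ∈ S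
        · refine per2_iter6 ?_
          simp only [hfa]
          rw [t1 hd1 hdn hS ha hb hp, t8 hb, t3 ha, t6 hb hq]
        · refine per3_iter6 ?_
          simp only [hfa]
          rw [t1 hd1 hdn hS ha hb hp, t8 hb, t3 ha, t5 hd1 hdn hS ha hb hq,
            t4 hd1 ha, t7 hb]

lemma per6_f2 (hd1 : 1 ≤ d) (hdn : d + 1 ≤ n) (S : Finset ℕ) (hS : IndepSet n S) :
    (toggle n d ∘ toggle n (d + 1))^[6] S = S := by
  set f := toggle n d ∘ toggle n (d + 1) with hf
  have hfa : ∀ X, f X = toggle n d (toggle n (d + 1) X) := fun X => rfl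
  by_cases ha : d ∈ S
  · -- S = insert d T
    have hb : d + 1 ∉ S := hS.2 d ha
    have hp : d - 1 ∉ S := fun h => hS.2 (d - 1) h (by rwa [Nat.sub_add_cancel hd1])
    set T := S.erase d with hTdef
    have hT : IndepSet n T := indep_mono (Finset.erase_subset _ _) hS
    have hdT : d ∉ T := Finset.notMem_erase _ _
    have hd'T : d + 1 ∉ T := fun h => hb (Finset.mem_of_mem_erase h)
    have hpT : d - 1 ∉ T := fun h => hp (Finset.mem_of_mem_erase h)
    have hSeq : S = insert d T := (Finset.insert_erase ha).symm
    rw [hSeq]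
    by_cases hq : d + 2 ∈ T
    · -- B ↦ T ↦ B
      refine per2_iter6 ?_
      simp only [hfa]
      rw [t8 hd'T, t3 hdT, t6 hd'T hq, t1 hd1 hdn hT hdT hd'T hpT]
    · -- B ↦ T ↦ C ↦ B
      refine per3_iter6 ?_
      simp only [hfa]
      rw [t8 hd'T, t3 hdT, t5 hd1 hdn hT hdT hd'T hq, t4 hd1 hdT,
        t7 hd'T, t1 hd1 hdn hT hdT hd'T hpT]
  · by_cases hb : d + 1 ∈ S
    · -- S = insert (d+1) T
      have hq : d + 2 ∉ S := hS.2 (d + 1) hb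
      set T := S.erase (d + 1) with hTdef
      have hT : IndepSet n T := indep_mono (Finset.erase_subset _ _) hS
      have hdT : d ∉ T := fun h => ha (Finset.mem_of_mem_erase h)
      have hd'T : d + 1 ∉ T := Finset.notMem_erase _ _
      have hqT : d + 2 ∉ T := fun h => hq (Finset.mem_of_mem_erase h)
      have hSeq : S = insert (d + 1) T := (Finset.insert_erase hb).symm
      rw [hSeq]
      by_cases hp : d - 1 ∈ T
      · -- C ↦ T ↦ C
        refine per2_iter6 ?_
        simp only [hfa]
        rw [t7 hd'T, t2 hd1 hdT hp, t5 hd1 hdn hT hdT hd'T hqT, t4 hd1 hdT]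
      · -- C ↦ B ↦ T ↦ C
        refine per3_iter6 ?_
        simp only [hfa]
        rw [t7 hd'T, t1 hd1 hdn hT hdT hd'T hp, t8 hd'T, t3 hdT,
          t5 hd1 hdn hT hdT hd'T hqT, t4 hd1 hdT]
    · -- S = T
      by_cases hq : d + 2 ∈ S
      · by_cases hp : d - 1 ∈ S
        · exact Function.iterate_fixed
            (by rw [hfa, t6 hb hq, t2 hd1 ha hp]) 6
        · -- T ↦ B ↦ T
          refine per2_iter6 ?_
          simp only [hfa]
          rw [t6 hb hq, t1 hd1 hdn hS ha hb hp, t8 hb, t3 ha]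
      · by_cases hp : d - 1 ∈ S
        · -- T ↦ C ↦ T
          refine per2_iter6 ?_
          simp only [hfa]
          rw [t5 hd1 hdn hS ha hb hq, t4 hd1 ha, t7 hb, t2 hd1 ha hp]
        · -- T ↦ C ↦ B ↦ T
          refine per3_iter6 ?_
          simp only [hfa]
          rw [t5 hd1 hdn hS ha hb hq, t4 hd1 ha, t7 hb, t1 hd1 hdn hS ha hb hp,
            t8 hb, t3 ha]

end Per6

lemma indep_empty {n : ℕ} : IndepSet n (∅ : Finset ℕ) :=
  ⟨Finset.empty_subset _, fun i hi => absurd hi (Finset.notMem_empty i)⟩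

lemma indep_singleton {n v : ℕ} (h1 : 1 ≤ v) (h2 : v ≤ n) : IndepSet n ({v} : Finset ℕ) := by
  refine ⟨?_, ?_⟩
  · intro x hx
    simp only [Finset.mem_singleton] at hx
    subst hx
    exact Finset.mem_Icc.2 ⟨h1, h2⟩
  · intro m hm
    simp only [Finset.mem_singleton] at hm
    subst hm
    simp

lemma lower6 {α : Type*} {f : α → α} {A X1 X2 W Y : α}
    (h1 : f A = X1) (h2 : f X1 = X2) (h3 : f X2 = A)
    (n1 : X1 ≠ A) (n2 : X2 ≠ A) (h4 : f W = Y) (h5 : f Y = W) (nY : Y ≠ W)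
    {k : ℕ} (hk1 : 1 ≤ k) (hk5 : k ≤ 5) (hkA : f^[k] A = A) (hkW : f^[k] W = W) : False := by
  interval_cases k
  · rw [Function.iterate_one, h1] at hkA
    exact n1 hkA
  · rw [show (2 : ℕ) = 1 + 1 from rfl] at hkA
    simp only [Function.iterate_add_apply, Function.iterate_one] at hkA
    rw [h1, h2] at hkA
    exact n2 hkA
  · rw [show (3 : ℕ) = 1 + 1 + 1 from rfl] at hkW
    simp only [Function.iterate_add_apply, Function.iterate_one] at hkW
    rw [h4, h5, h4] at hkW
    exact nY hkW
  · rw [show (4 : ℕ) = 1 + 1 + 1 + 1 from rfl] at hkA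
    simp only [Function.iterate_add_apply, Function.iterate_one] at hkA
    rw [h1, h2, h3, h1] at hkA
    exact n1 hkA
  · rw [show (5 : ℕ) = 1 + 1 + 1 + 1 + 1 from rfl] at hkA
    simp only [Function.iterate_add_apply, Function.iterate_one] at hkA
    rw [h1, h2, h3, h1, h2] at hkA
    exact n2 hkA

end Stmt5Aux

open Stmt5Aux in
/-- For `n ≥ 3`, the order of the bijection `τ_i ∘ τ_j` of `I_n` is 1 if `i = j`,
2 if `|i − j| ≥ 2`, and 6 if `|i − j| = 1`. -/
theorem stmt5 (n : ℕ) (hn : 3 ≤ n) (i j : ℕ) (hi1 : 1 ≤ i) (hin : i ≤ n)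
    (hj1 : 1 ≤ j) (hjn : j ≤ n) :
    (i = j → IsLeast
      {k : ℕ | 1 ≤ k ∧ ∀ S : Finset ℕ, IndepSet n S →
        (toggle n i ∘ toggle n j)^[k] S = S} 1)
    ∧ (2 ≤ |(i : ℤ) - (j : ℤ)| → IsLeast
      {k : ℕ | 1 ≤ k ∧ ∀ S : Finset ℕ, IndepSet n S →
        (toggle n i ∘ toggle n j)^[k] S = S} 2)
    ∧ (|(i : ℤ) - (j : ℤ)| = 1 → IsLeast
      {k : ℕ | 1 ≤ k ∧ ∀ S : Finset ℕ, IndepSet n S →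
        (toggle n i ∘ toggle n j)^[k] S = S} 6) := by
  refine ⟨?_, ?_, ?_⟩
  · -- i = j
    rintro rfl
    constructor
    · refine ⟨le_refl 1, fun S hS => ?_⟩
      rw [Function.iterate_one]
      exact toggle_toggle hi1 hin hS
    · rintro k ⟨hk1, _⟩; exact hk1
  · -- |i - j| ≥ 2
    intro habs
    have hsep : i + 2 ≤ j ∨ j + 2 ≤ i := by
      rcases abs_cases ((i : ℤ) - (j : ℤ)) with ⟨h, _⟩ | ⟨h, _⟩ <;> omega
    constructor
    · refine ⟨by norm_num, fun S hS => ?_⟩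
      have hSj : IndepSet n (toggle n j S) := indep_toggle hS
      show (toggle n i ∘ toggle n j) ((toggle n i ∘ toggle n j)^[1] S) = S
      simp only [Function.iterate_one, Function.comp_apply]
      rw [comm hj1 hjn hi1 hin hsep.symm hSj, toggle_toggle hj1 hjn hS,
        toggle_toggle hi1 hin hS]
    · rintro k ⟨hk1, hk⟩
      by_contra hlt
      push_neg at hlt
      have hk1' : k = 1 := by omega
      subst hk1'
      have h := hk ∅ indep_empty
      simp only [Function.iterate_one, Function.comp_apply] at h
      rw [toggle_ins hj1 hjn indep_empty (by simp) (by simp) (by simp)] at h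
      have hij : i ≠ j := by omega
      have h1 : i ∉ insert j (∅ : Finset ℕ) := by simp [hij]
      have h2 : i - 1 ∉ insert j (∅ : Finset ℕ) := by simp; omega
      have h3 : i + 1 ∉ insert j (∅ : Finset ℕ) := by simp; omega
      have hsing : IndepSet n (insert j (∅ : Finset ℕ)) := by
        rw [LawfulSingleton.insert_empty_eq]; exact indep_singleton hj1 hjn
      rw [toggle_ins hi1 hin hsing h1 h2 h3] at h
      exact absurd h (by simp)
  · -- |i - j| = 1
    intro habs
    have hcase : j = i + 1 ∨ i = j + 1 := by
      rcases abs_cases ((i : ℤ) - (j : ℤ)) with ⟨h, _⟩ | ⟨h, _⟩ <;> omega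
    rcases hcase with rfl | rfl
    · -- f = toggle n i ∘ toggle n (i+1), d = i
      have hdn : i + 1 ≤ n := hjn
      constructor
      · exact ⟨by norm_num, fun S hS => per6_f2 hi1 hdn S hS⟩
      · rintro k ⟨hk1, hk⟩
        by_contra hlt
        push_neg at hlt
        have hk5 : k ≤ 5 := by omega
        set f := toggle n i ∘ toggle n (i + 1) with hf
        have hfa : ∀ X, f X = toggle n i (toggle n (i + 1) X) := fun X => rfl
        have e0 : IndepSet n (∅ : Finset ℕ) := indep_empty
        have hd0 : i ∉ (∅ : Finset ℕ) := by simp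
        have hd'0 : i + 1 ∉ (∅ : Finset ℕ) := by simp
        have h1 : f ∅ = insert (i + 1) ∅ := by
          rw [hfa, t5 hi1 hdn e0 hd0 hd'0 (by simp), t4 hi1 hd0]
        have h2 : f (insert (i + 1) ∅) = insert i ∅ := by
          rw [hfa, t7 hd'0, t1 hi1 hdn e0 hd0 hd'0 (by simp)]
        have h3 : f (insert i ∅) = ∅ := by
          rw [hfa, t8 hd'0, t3 hd0]
        have n1 : insert (i + 1) (∅ : Finset ℕ) ≠ ∅ := by simp
        have n2 : insert i (∅ : Finset ℕ) ≠ ∅ := by simp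
        by_cases hv : i + 2 ≤ n
        · set W : Finset ℕ := {i + 2} with hW
          have hWind : IndepSet n W := indep_singleton (by omega) hv
          have hdW : i ∉ W := by simp [hW]
          have hd'W : i + 1 ∉ W := by simp [hW]
          have hpW : i - 1 ∉ W := by simp [hW]; omega
          have hqW : i + 2 ∈ W := by simp [hW]
          have h4 : f W = insert i W := by
            rw [hfa, t6 hd'W hqW, t1 hi1 hdn hWind hdW hd'W hpW]
          have h5 : f (insert i W) = W := by
            rw [hfa, t8 hd'W, t3 hdW]
          have nY : insert i W ≠ W := fun h => hdW (h ▸ Finset.mem_insert_self i W)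
          exact lower6 h1 h2 h3 n1 n2 h4 h5 nY hk1 hk5 (hk ∅ e0) (hk W hWind)
        · have hi2 : 2 ≤ i := by omega
          set W : Finset ℕ := {i - 1} with hW
          have hWind : IndepSet n W := indep_singleton (by omega) (by omega)
          have hdW : i ∉ W := by simp [hW]; omega
          have hd'W : i + 1 ∉ W := by simp [hW]; omega
          have hpW : i - 1 ∈ W := by simp [hW]
          have hqW : i + 2 ∉ W := by simp [hW]; omega
          have h4 : f W = insert (i + 1) W := by
            rw [hfa, t5 hi1 hdn hWind hdW hd'W hqW, t4 hi1 hdW]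
          have h5 : f (insert (i + 1) W) = W := by
            rw [hfa, t7 hd'W, t2 hi1 hdW hpW]
          have nY : insert (i + 1) W ≠ W := fun h => hd'W (h ▸ Finset.mem_insert_self _ W)
          exact lower6 h1 h2 h3 n1 n2 h4 h5 nY hk1 hk5 (hk ∅ e0) (hk W hWind)
    · -- i = j + 1 : f = toggle n (j+1) ∘ toggle n j, d = j
      have hdn : j + 1 ≤ n := hin
      constructor
      · exact ⟨by norm_num, fun S hS => per6_f1 hj1 hdn S hS⟩
      · rintro k ⟨hk1, hk⟩
        by_contra hlt
        push_neg at hlt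
        have hk5 : k ≤ 5 := by omega
        set f := toggle n (j + 1) ∘ toggle n j with hf
        have hfa : ∀ X, f X = toggle n (j + 1) (toggle n j X) := fun X => rfl
        have e0 : IndepSet n (∅ : Finset ℕ) := indep_empty
        have hd0 : j ∉ (∅ : Finset ℕ) := by simp
        have hd'0 : j + 1 ∉ (∅ : Finset ℕ) := by simp
        have h1 : f ∅ = insert j ∅ := by
          rw [hfa, t1 hj1 hdn e0 hd0 hd'0 (by simp), t8 hd'0]
        have h2 : f (insert j ∅) = insert (j + 1) ∅ := by
          rw [hfa, t3 hd0, t5 hj1 hdn e0 hd0 hd'0 (by simp)]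
        have h3 : f (insert (j + 1) ∅) = ∅ := by
          rw [hfa, t4 hj1 hd0, t7 hd'0]
        have n1 : insert j (∅ : Finset ℕ) ≠ ∅ := by simp
        have n2 : insert (j + 1) (∅ : Finset ℕ) ≠ ∅ := by simp
        by_cases hv : j + 2 ≤ n
        · set W : Finset ℕ := {j + 2} with hW
          have hWind : IndepSet n W := indep_singleton (by omega) hv
          have hdW : j ∉ W := by simp [hW]
          have hd'W : j + 1 ∉ W := by simp [hW]
          have hpW : j - 1 ∉ W := by simp [hW]; omega
          have hqW : j + 2 ∈ W := by simp [hW]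
          have h4 : f W = insert j W := by
            rw [hfa, t1 hj1 hdn hWind hdW hd'W hpW, t8 hd'W]
          have h5 : f (insert j W) = W := by
            rw [hfa, t3 hdW, t6 hd'W hqW]
          have nY : insert j W ≠ W := fun h => hdW (h ▸ Finset.mem_insert_self j W)
          exact lower6 h1 h2 h3 n1 n2 h4 h5 nY hk1 hk5 (hk ∅ e0) (hk W hWind)
        · have hj2 : 2 ≤ j := by omega
          set W : Finset ℕ := {j - 1} with hW
          have hWind : IndepSet n W := indep_singleton (by omega) (by omega)
          have hdW : j ∉ W := by simp [hW]; omega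
          have hd'W : j + 1 ∉ W := by simp [hW]; omega
          have hpW : j - 1 ∈ W := by simp [hW]
          have hqW : j + 2 ∉ W := by simp [hW]; omega
          have h4 : f W = insert (j + 1) W := by
            rw [hfa, t2 hj1 hdW hpW, t5 hj1 hdn hWind hdW hd'W hqW]
          have h5 : f (insert (j + 1) W) = W := by
            rw [hfa, t4 hj1 hdW, t7 hd'W]
          have nY : insert (j + 1) W ≠ W := fun h => hd'W (h ▸ Finset.mem_insert_self _ W)
          exact lower6 h1 h2 h3 n1 n2 h4 h5 nY hk1 hk5 (hk ∅ e0) (hk W hWind)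
end

section
/- Let S ∈ I_n and j ∈ {1,…,n} with j ∈ S. Then: (1) j ∉ φ(S) and j ∉ φ^{-1}(S); (2) if j ≥ 2 then j−1 ∉ φ(S), and if j ≤ n−1 then j+1 ∉ φ^{-1}(S). -/
lemma toggle_mem_ne (n i : ℕ) (T : Finset ℕ) (m : ℕ) (h : m ≠ i) :
    m ∈ toggle n i T ↔ m ∈ T := by
  unfold toggle
  split_ifs <;> simp [Finset.mem_erase, Finset.mem_insert, h]

lemma toggle_self_not_mem (n i : ℕ) (T : Finset ℕ) (h : i ∈ T) : i ∉ toggle n i T := by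
  simp [toggle, h]

lemma toggle_blocked (n i : ℕ) (T : Finset ℕ) (h : i + 1 ∈ T) : i ∉ toggle n i T := by
  unfold toggle
  split_ifs with h1 h2
  · simp
  · exact absurd (h2.2 i (Finset.mem_insert_self i T))
      (by simp [Finset.mem_insert, h])
  · exact h1

lemma toggle_blocked' (n j : ℕ) (T : Finset ℕ) (h : j ∈ T) :
    j + 1 ∉ toggle n (j + 1) T := by
  unfold toggle
  split_ifs with h1 h2
  · simp
  · exact absurd (h2.2 j (Finset.mem_insert_of_mem h)) (by simp)
  · exact h1

lemma foldl_notouch (n : ℕ) (l : List ℕ) (m : ℕ) (h : ∀ k ∈ l, k + 1 ≠ m)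
    (T : Finset ℕ) :
    m ∈ l.foldl (fun T k => toggle n (k + 1) T) T ↔ m ∈ T := by
  induction l generalizing T with
  | nil => simp
  | cons a t ih =>
      simp only [List.foldl_cons]
      rw [ih (fun k hk => h k (List.mem_cons_of_mem a hk)),
        toggle_mem_ne n (a + 1) T m (fun he => h a List.mem_cons_self he.symm)]

lemma foldr_notouch (n : ℕ) (l : List ℕ) (m : ℕ) (h : ∀ k ∈ l, k + 1 ≠ m)
    (T : Finset ℕ) :
    m ∈ l.foldr (fun k T => toggle n (k + 1) T) T ↔ m ∈ T := by
  induction l with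
  | nil => simp
  | cons a t ih =>
      simp only [List.foldr_cons]
      rw [toggle_mem_ne n (a + 1) _ m (fun he => h a List.mem_cons_self he.symm),
        ih (fun k hk => h k (List.mem_cons_of_mem a hk))]

/-- If `j ∈ S` then: (1) `j ∉ φ(S)` and `j ∉ φ⁻¹(S)`;
(2) if `j ≥ 2` then `j−1 ∉ φ(S)`, and if `j ≤ n−1` then `j+1 ∉ φ⁻¹(S)`. -/
theorem stmt9 (n : ℕ) (hn : 2 ≤ n) (S : Finset ℕ) (hS : IndepSet n S)
    (j : ℕ) (hj1 : 1 ≤ j) (hjn : j ≤ n) (hjS : j ∈ S) :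
    (j ∉ phi n S ∧ j ∉ phiInv n S)
    ∧ (2 ≤ j → j - 1 ∉ phi n S)
    ∧ (j ≤ n - 1 → j + 1 ∉ phiInv n S) := by
  set f : Finset ℕ → ℕ → Finset ℕ := fun T k => toggle n (k + 1) T with hf
  set g : ℕ → Finset ℕ → Finset ℕ := fun k T => toggle n (k + 1) T with hg
  have hrange : List.range n = List.range j ++ (List.range (n - j)).map (j + ·) := by
    rw [← List.range_add]; congr 1; omega
  -- tail indices never touch m ≤ j
  have htail : ∀ m ≤ j, ∀ k ∈ (List.range (n - j)).map (j + ·), k + 1 ≠ m := by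
    intro m hm k hk
    simp only [List.mem_map, List.mem_range] at hk
    omega
  have hhead : ∀ p, ∀ m, p < m → ∀ k ∈ List.range p, k + 1 ≠ m := by
    intro p m hpm k hk
    simp only [List.mem_range] at hk
    omega
  obtain ⟨m, rfl⟩ : ∃ m, j = m + 1 := ⟨j - 1, by omega⟩
  -- phi part
  have hphi : phi n S = ((List.range (n - (m + 1))).map ((m + 1) + ·)).foldl f
      (f ((List.range m).foldl f S) m) := by
    rw [phi, hrange, List.foldl_append, List.range_succ, List.foldl_append]
    rfl
  have hjB : m + 1 ∈ (List.range m).foldl f S :=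
    (foldl_notouch n _ _ (hhead m (m + 1) (by omega)) S).mpr hjS
  have h1 : m + 1 ∉ phi n S := by
    rw [hphi, foldl_notouch n _ _ (htail (m + 1) le_rfl)]
    exact toggle_self_not_mem n (m + 1) _ hjB
  -- phiInv part
  have hphiInv : phiInv n S = (List.range (m + 1)).foldr g
      (((List.range (n - (m + 1))).map ((m + 1) + ·)).foldr g S) := by
    rw [phiInv, hrange, List.foldr_append]
  set R : Finset ℕ := ((List.range (n - (m + 1))).map ((m + 1) + ·)).foldr g S with hR
  have hjR : m + 1 ∈ R :=
    (foldr_notouch n _ _ (htail (m + 1) le_rfl) S).mpr hjS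
  have h2 : m + 1 ∉ phiInv n S := by
    rw [hphiInv, List.range_succ, List.foldr_append]
    have : m + 1 ∉ (List.foldr g R [m]) := by
      simpa [g] using toggle_self_not_mem n (m + 1) R hjR
    rw [foldr_notouch n _ _ (hhead m (m + 1) (by omega))]
    exact this
  refine ⟨⟨h1, h2⟩, ?_, ?_⟩
  · -- 2 ≤ j → j - 1 ∉ phi
    intro hm2
    obtain ⟨p, rfl⟩ : ∃ p, m = p + 1 := ⟨m - 1, by omega⟩
    simp only [Nat.add_sub_cancel]
    have hjC : p + 2 ∈ (List.range p).foldl f S :=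
      (foldl_notouch n _ _ (hhead p (p + 2) (by omega)) S).mpr hjS
    have hB : p + 1 ∉ f ((List.range p).foldl f S) p := by
      simpa [f] using toggle_blocked n (p + 1) _ (by simpa using hjC)
    rw [hphi, foldl_notouch n _ _ (htail (p + 1) (by omega))]
    have : (List.range (p + 1)).foldl f S = f ((List.range p).foldl f S) p := by
      rw [List.range_succ, List.foldl_append]; rfl
    rw [this]
    simp only [f]
    rw [toggle_mem_ne n _ _ _ (by omega)]
    exact hB
  · -- j ≤ n - 1 → j + 1 ∉ phiInv
    intro hjle
    have hlt : m + 1 < n := by omega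
    -- decompose R : first toggle in R-block is at index (m+1)+1 = m+2
    have hnm : n - (m + 1) = (n - (m + 2)) + 1 := by omega
    have hRdecomp : R = toggle n (m + 2)
        (((List.range (n - (m + 2))).map (fun x => (m + 1) + Nat.succ x)).foldr g S) := by
      rw [hR, hnm, List.range_succ_eq_map]
      simp only [List.map_cons, List.foldr_cons, List.map_map]
      rfl
    set R' : Finset ℕ :=
      ((List.range (n - (m + 2))).map (fun x => (m + 1) + Nat.succ x)).foldr g S with hR'
    have hjR' : m + 1 ∈ R' := by
      rw [hR']
      refine (foldr_notouch n _ _ ?_ S).mpr hjS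
      intro k hk
      simp only [List.mem_map, List.mem_range] at hk
      omega
    have hnotR : m + 2 ∉ R := by
      rw [hRdecomp]
      simpa using toggle_blocked' n (m + 1) R' hjR'
    rw [hphiInv]
    rw [foldr_notouch n _ _ (hhead (m + 1) (m + 2) (by omega))]
    exact hnotR
end

section
/- Let k be a positive integer. (a) The number of symmetrical independent sets of the path graph P_{2k} is F_{k+1}. (b) The number of symmetrical independent sets of the path graph P_{2k−1} is F_{k+2}. -/
/-- The reverse `S^rev = {n+1−i : i ∈ S}` of an independent set. -/
def revSet (n : ℕ) (S : Finset ℕ) : Finset ℕ := S.image fun i => n + 1 - i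

def indepSets (n : ℕ) : Finset (Finset ℕ) :=
  (Finset.Icc 1 n).powerset.filter (fun S => ∀ i ∈ S, i + 1 ∉ S)

lemma mem_indepSets {n : ℕ} {S : Finset ℕ} :
    S ∈ indepSets n ↔ S ⊆ Finset.Icc 1 n ∧ ∀ i ∈ S, i + 1 ∉ S := by
  simp [indepSets, Finset.mem_filter, Finset.mem_powerset]

lemma indepSets_succ_succ (n : ℕ) :
    indepSets (n+2) = indepSets (n+1) ∪ (indepSets n).image (insert (n+2)) := by
  ext S
  simp only [Finset.mem_union, Finset.mem_image, mem_indepSets]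
  constructor
  · rintro ⟨hsub, hind⟩
    by_cases h : n+2 ∈ S
    · right
      refine ⟨S.erase (n+2), ⟨?_, ?_⟩, Finset.insert_erase h⟩
      · intro i hi
        have hi' := Finset.mem_of_mem_erase hi
        have hb := hsub hi'
        simp only [Finset.mem_Icc] at hb ⊢
        have hne : i ≠ n+2 := Finset.ne_of_mem_erase hi
        have hne1 : i ≠ n+1 := by rintro rfl; exact hind _ hi' h
        omega
      · intro i hi h1
        exact hind i (Finset.mem_of_mem_erase hi) (Finset.mem_of_mem_erase h1)
    · left
      refine ⟨?_, hind⟩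
      intro i hi
      have hb := hsub hi
      simp only [Finset.mem_Icc] at hb ⊢
      have : i ≠ n+2 := by rintro rfl; exact h hi
      omega
  · rintro (⟨hsub, hind⟩ | ⟨T, ⟨hsub, hind⟩, rfl⟩)
    · refine ⟨?_, hind⟩
      intro i hi
      have hb := hsub hi
      simp only [Finset.mem_Icc] at hb ⊢
      omega
    · constructor
      · intro i hi
        rcases Finset.mem_insert.1 hi with rfl | hi
        · simp [Finset.mem_Icc]
        · have hb := hsub hi; simp only [Finset.mem_Icc] at hb ⊢; omega
      · intro i hi h1
        rcases Finset.mem_insert.1 hi with rfl | hi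
        · rcases Finset.mem_insert.1 h1 with h | h
          · omega
          · have hb := hsub h; simp only [Finset.mem_Icc] at hb; omega
        · rcases Finset.mem_insert.1 h1 with h | h
          · have hb := hsub hi; simp only [Finset.mem_Icc] at hb; omega
          · exact hind i hi h

lemma card_indepSets : ∀ n, (indepSets n).card = Nat.fib (n+2)
  | 0 => by decide
  | 1 => by decide
  | (n+2) => by
    have hdisj : Disjoint (indepSets (n+1)) ((indepSets n).image (insert (n+2))) := by
      rw [Finset.disjoint_left]
      rintro S hS hS'
      rcases Finset.mem_image.1 hS' with ⟨T, _, rfl⟩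
      have := (mem_indepSets.1 hS).1 (Finset.mem_insert_self (n+2) T)
      simp [Finset.mem_Icc] at this
    have hinj : Set.InjOn (insert (n+2)) ((indepSets n : Finset (Finset ℕ)) : Set (Finset ℕ)) := by
      intro T₁ h₁ T₂ h₂ he
      have n₁ : n+2 ∉ T₁ := fun h => by
        have := (mem_indepSets.1 h₁).1 h; simp [Finset.mem_Icc] at this
      have n₂ : n+2 ∉ T₂ := fun h => by
        have := (mem_indepSets.1 h₂).1 h; simp [Finset.mem_Icc] at this
      have := congrArg (fun s => Finset.erase s (n+2)) he
      simpa [Finset.erase_insert n₁, Finset.erase_insert n₂] using this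
    rw [indepSets_succ_succ, Finset.card_union_of_disjoint hdisj,
      Finset.card_image_of_injOn hinj, card_indepSets (n+1), card_indepSets n]
    have h1 : Nat.fib (n+2+2) = Nat.fib (n+2) + Nat.fib (n+2+1) := Nat.fib_add_two
    have h2 : n+1+2 = n+2+1 := by omega
    rw [h1, h2]
    omega

def symSets (n : ℕ) : Finset (Finset ℕ) :=
  (indepSets n).filter (fun S => S.image (fun i => n + 1 - i) = S)

lemma mem_symSets {n : ℕ} {S : Finset ℕ} :
    S ∈ symSets n ↔ (S ⊆ Finset.Icc 1 n ∧ ∀ i ∈ S, i + 1 ∉ S)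
      ∧ S.image (fun i => n + 1 - i) = S := by
  simp only [symSets, Finset.mem_filter, mem_indepSets]

lemma symSet_coe (n : ℕ) :
    {S : Finset ℕ | IndepSet n S ∧ revSet n S = S} = ↑(symSets n) := by
  ext S
  simp only [Set.mem_setOf_eq, Finset.mem_coe, mem_symSets, IndepSet, revSet]

lemma card_symSets_even (k : ℕ) (hk : 1 ≤ k) :
    (symSets (2*k)).card = (indepSets (k-1)).card := by
  apply Finset.card_nbij' (fun S => S.filter (fun i => i ≤ k-1))
    (fun T => T ∪ T.image (fun i => 2*k + 1 - i))
  · intro S hS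
    obtain ⟨⟨hsub, hind⟩, hsym⟩ := mem_symSets.1 hS
    rw [Finset.mem_coe, mem_indepSets]
    constructor
    · intro i hi
      rw [Finset.mem_filter] at hi
      have hb := hsub hi.1
      have h2 := hi.2
      simp only [Finset.mem_Icc] at hb ⊢
      omega
    · intro i hi h1
      rw [Finset.mem_filter] at hi h1
      exact hind i hi.1 h1.1
  · intro T hT
    obtain ⟨hTsub, hTind⟩ := mem_indepSets.1 hT
    have hTb : ∀ a ∈ T, 1 ≤ a ∧ a ≤ k-1 := fun a ha => by
      simpa [Finset.mem_Icc] using hTsub ha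
    rw [Finset.mem_coe, mem_symSets]
    refine ⟨⟨?_, ?_⟩, ?_⟩
    · intro i hi
      simp only [Finset.mem_union, Finset.mem_image] at hi
      simp only [Finset.mem_Icc]
      rcases hi with hi | ⟨a, ha, rfl⟩
      · have := hTb i hi; omega
      · have := hTb a ha; omega
    · intro i hi h1
      simp only [Finset.mem_union, Finset.mem_image] at hi h1
      rcases hi with hi | ⟨a, ha, rfl⟩
      · rcases h1 with h1 | ⟨b, hb, hb1⟩
        · exact hTind i hi h1
        · have := hTb i hi; have := hTb b hb; omega
      · rcases h1 with h1 | ⟨b, hb, hb1⟩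
        · have := hTb a ha; have := hTb _ h1; omega
        · have h2 := hTb a ha; have h3 := hTb b hb
          have e : a = b + 1 := by omega
          exact hTind b hb (e ▸ ha)
    · rw [Finset.image_union]
      have h2 : (T.image (fun i => 2*k + 1 - i)).image (fun i => 2*k + 1 - i) = T := by
        rw [Finset.image_image]
        ext i
        simp only [Finset.mem_image, Function.comp]
        constructor
        · rintro ⟨a, ha, rfl⟩
          have := hTb a ha
          have e : 2*k + 1 - (2*k + 1 - a) = a := by omega
          rw [e]; exact ha
        · intro hi
          exact ⟨i, hi, by have := hTb i hi; omega⟩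
      rw [h2, Finset.union_comm]
  · intro S hS
    obtain ⟨⟨hsub, hind⟩, hsym⟩ := mem_symSets.1 hS
    have hmem : ∀ i ∈ S, 2*k + 1 - i ∈ S := fun i hi => by
      rw [← hsym]; exact Finset.mem_image_of_mem _ hi
    have hb : ∀ i ∈ S, 1 ≤ i ∧ i ≤ 2*k := fun i hi => by
      simpa [Finset.mem_Icc] using hsub hi
    have hkS : k ∉ S := by
      intro h
      have h2 := hmem k h
      have e : 2*k + 1 - k = k + 1 := by omega
      rw [e] at h2
      exact hind k h h2
    have hk1S : k + 1 ∉ S := by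
      intro h
      have h2 := hmem (k+1) h
      have e : 2*k + 1 - (k+1) = k := by omega
      rw [e] at h2
      exact hkS h2
    ext i
    simp only [Finset.mem_union, Finset.mem_filter, Finset.mem_image]
    constructor
    · rintro (⟨hi, _⟩ | ⟨a, ⟨ha, _⟩, rfl⟩)
      · exact hi
      · exact hmem a ha
    · intro hi
      have hbi := hb i hi
      by_cases hle : i ≤ k - 1
      · exact Or.inl ⟨hi, hle⟩
      · right
        have hik : i ≠ k := fun e => hkS (e ▸ hi)
        have hik1 : i ≠ k + 1 := fun e => hk1S (e ▸ hi)
        exact ⟨2*k + 1 - i, ⟨hmem i hi, by omega⟩, by omega⟩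
  · intro T hT
    obtain ⟨hTsub, hTind⟩ := mem_indepSets.1 hT
    have hTb : ∀ a ∈ T, 1 ≤ a ∧ a ≤ k-1 := fun a ha => by
      simpa [Finset.mem_Icc] using hTsub ha
    ext i
    simp only [Finset.mem_filter, Finset.mem_union, Finset.mem_image]
    constructor
    · rintro ⟨hi | ⟨a, ha, rfl⟩, hle⟩
      · exact hi
      · have := hTb a ha
        exact absurd hle (by omega)
    · intro hi
      exact ⟨Or.inl hi, (hTb i hi).2⟩

lemma card_symSets_odd (k : ℕ) (hk : 1 ≤ k) :
    (symSets (2*k - 1)).card = (indepSets k).card := by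
  apply Finset.card_nbij' (fun S => S.filter (fun i => i ≤ k))
    (fun T => T ∪ T.image (fun i => 2*k - 1 + 1 - i))
  · intro S hS
    obtain ⟨⟨hsub, hind⟩, hsym⟩ := mem_symSets.1 hS
    rw [Finset.mem_coe, mem_indepSets]
    constructor
    · intro i hi
      rw [Finset.mem_filter] at hi
      have hb := hsub hi.1
      have h2 := hi.2
      simp only [Finset.mem_Icc] at hb ⊢
      omega
    · intro i hi h1
      rw [Finset.mem_filter] at hi h1
      exact hind i hi.1 h1.1
  · intro T hT
    obtain ⟨hTsub, hTind⟩ := mem_indepSets.1 hT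
    have hTb : ∀ a ∈ T, 1 ≤ a ∧ a ≤ k := fun a ha => by
      simpa [Finset.mem_Icc] using hTsub ha
    rw [Finset.mem_coe, mem_symSets]
    refine ⟨⟨?_, ?_⟩, ?_⟩
    · intro i hi
      simp only [Finset.mem_union, Finset.mem_image] at hi
      simp only [Finset.mem_Icc]
      rcases hi with hi | ⟨a, ha, rfl⟩
      · have := hTb i hi; omega
      · have := hTb a ha; omega
    · intro i hi h1
      simp only [Finset.mem_union, Finset.mem_image] at hi h1
      rcases hi with hi | ⟨a, ha, rfl⟩
      · rcases h1 with h1 | ⟨b, hb, hb1⟩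
        · exact hTind i hi h1
        · have h2 := hTb i hi
          have h3 := hTb b hb
          have hcase : b + 1 = i ∨ i + 1 = b := by omega
          rcases hcase with h | h
          · exact hTind b hb (h ▸ hi)
          · exact hTind i hi (h ▸ hb)
      · rcases h1 with h1 | ⟨b, hb, hb1⟩
        · have := hTb a ha; have := hTb _ h1; omega
        · have h2 := hTb a ha; have h3 := hTb b hb
          have e : a = b + 1 := by omega
          exact hTind b hb (e ▸ ha)
    · rw [Finset.image_union]
      have h2 : (T.image (fun i => 2*k - 1 + 1 - i)).image (fun i => 2*k - 1 + 1 - i) = T := by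
        rw [Finset.image_image]
        ext i
        simp only [Finset.mem_image, Function.comp]
        constructor
        · rintro ⟨a, ha, rfl⟩
          have := hTb a ha
          have e : 2*k - 1 + 1 - (2*k - 1 + 1 - a) = a := by omega
          rw [e]; exact ha
        · intro hi
          exact ⟨i, hi, by have := hTb i hi; omega⟩
      rw [h2, Finset.union_comm]
  · intro S hS
    obtain ⟨⟨hsub, hind⟩, hsym⟩ := mem_symSets.1 hS
    have hmem : ∀ i ∈ S, 2*k - 1 + 1 - i ∈ S := fun i hi => by
      rw [← hsym]; exact Finset.mem_image_of_mem _ hi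
    have hb : ∀ i ∈ S, 1 ≤ i ∧ i ≤ 2*k - 1 := fun i hi => by
      simpa [Finset.mem_Icc] using hsub hi
    ext i
    simp only [Finset.mem_union, Finset.mem_filter, Finset.mem_image]
    constructor
    · rintro (⟨hi, _⟩ | ⟨a, ⟨ha, _⟩, rfl⟩)
      · exact hi
      · exact hmem a ha
    · intro hi
      have hbi := hb i hi
      by_cases hle : i ≤ k
      · exact Or.inl ⟨hi, hle⟩
      · right
        exact ⟨2*k - 1 + 1 - i, ⟨hmem i hi, by omega⟩, by omega⟩
  · intro T hT
    obtain ⟨hTsub, hTind⟩ := mem_indepSets.1 hT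
    have hTb : ∀ a ∈ T, 1 ≤ a ∧ a ≤ k := fun a ha => by
      simpa [Finset.mem_Icc] using hTsub ha
    ext i
    simp only [Finset.mem_filter, Finset.mem_union, Finset.mem_image]
    constructor
    · rintro ⟨hi | ⟨a, ha, rfl⟩, hle⟩
      · exact hi
      · have := hTb a ha
        have e : 2*k - 1 + 1 - a = a := by omega
        rw [e]; exact ha
    · intro hi
      exact ⟨Or.inl hi, (hTb i hi).2⟩

/-- (a) The number of symmetrical independent sets of `P_{2k}` is `F_{k+1}`.
(b) The number of symmetrical independent sets of `P_{2k−1}` is `F_{k+2}`. -/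
theorem stmt13 (k : ℕ) (hk : 1 ≤ k) :
    Set.ncard {S : Finset ℕ | IndepSet (2 * k) S ∧ revSet (2 * k) S = S}
        = Nat.fib (k + 1)
    ∧ Set.ncard {S : Finset ℕ | IndepSet (2 * k - 1) S ∧ revSet (2 * k - 1) S = S}
        = Nat.fib (k + 2) := by
  constructor
  · rw [symSet_coe, Set.ncard_coe_finset, card_symSets_even k hk, card_indepSets]
    congr 1
    omega
  · rw [symSet_coe, Set.ncard_coe_finset, card_symSets_odd k hk, card_indepSets]
end

section
/- For every integer n ≥ 1, the number of orbits of the cyclic rotation action of ℤ/nℤ on the set of binary strings s of length n with no two cyclically consecutive 1s (i.e., no index i, taken modulo n, with s_i = 1 and s_{i+1} = 1) equals (1/n) ∑_{d | n} φ(n/d) (F_{d−1} + F_{d+1}), where φ is Euler's totient function. -/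
open List Finset

abbrev NAP : Bool → Bool → Prop := fun a b => ¬(a = true ∧ b = true)

/-- Finset of all length-`m` binary lists with no two adjacent `true`s. -/
def NS : ℕ → Finset (List Bool)
  | 0 => {[]}
  | (m+1) => ((NS m).image (List.cons false)) ∪
      (((NS m).filter (fun l => l.head? ≠ some true)).image (List.cons true))

lemma mem_NS (m : ℕ) (l : List Bool) : l ∈ NS m ↔ l.length = m ∧ l.Chain' NAP := by
  induction m generalizing l with
  | zero =>
    simp [NS]
    rintro rfl; simp [List.Chain']
  | succ m ih =>
    simp only [NS, Finset.mem_union, Finset.mem_image, Finset.mem_filter]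
    constructor
    · rintro (⟨t, ht, rfl⟩ | ⟨t, ⟨ht, hh⟩, rfl⟩)
      · obtain ⟨h1, h2⟩ := (ih t).mp ht
        refine ⟨by simp [h1], ?_⟩
        rw [List.Chain', List.isChain_cons]
        exact ⟨by simp, h2⟩
      · obtain ⟨h1, h2⟩ := (ih t).mp ht
        refine ⟨by simp [h1], ?_⟩
        rw [List.Chain', List.isChain_cons]
        refine ⟨?_, h2⟩
        intro y hy
        simp only [NAP]
        rintro ⟨-, rfl⟩
        exact hh hy
    · rintro ⟨h1, h2⟩
      match l with
      | [] => simp at h1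
      | a :: t =>
        rw [List.Chain', List.isChain_cons] at h2
        have ht : t ∈ NS m := (ih t).mpr ⟨by simpa using h1, h2.2⟩
        cases a with
        | false => exact Or.inl ⟨t, ht, rfl⟩
        | true =>
          refine Or.inr ⟨t, ⟨ht, ?_⟩, rfl⟩
          intro hh
          exact h2.1 true hh ⟨rfl, rfl⟩

lemma NS_filter_head (m : ℕ) :
    (NS (m+1)).filter (fun l => l.head? ≠ some true) = (NS m).image (List.cons false) := by
  ext l
  simp only [NS, Finset.mem_filter, Finset.mem_union, Finset.mem_image]
  constructor
  · rintro ⟨(⟨t, ht, rfl⟩ | ⟨t, ht, rfl⟩), hh⟩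
    · exact ⟨t, ht, rfl⟩
    · simp at hh
  · rintro ⟨t, ht, rfl⟩
    exact ⟨Or.inl ⟨t, ht, rfl⟩, by simp⟩

lemma card_NS_succ (m : ℕ) : (NS (m+1)).card = (NS m).card +
    ((NS m).filter (fun l => l.head? ≠ some true)).card := by
  have hdisj : Disjoint ((NS m).image (List.cons false))
      (((NS m).filter (fun l => l.head? ≠ some true)).image (List.cons true)) := by
    rw [Finset.disjoint_left]
    intro l hl hl'
    simp only [Finset.mem_image, Finset.mem_filter] at hl hl'
    obtain ⟨t, _, rfl⟩ := hl
    obtain ⟨u, _, h⟩ := hl'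
    simp at h
  rw [NS, Finset.card_union_of_disjoint hdisj,
    Finset.card_image_of_injective _ (fun a b h => by simpa using h),
    Finset.card_image_of_injective _ (fun a b h => by simpa using h)]

lemma card_NS (m : ℕ) : (NS m).card = Nat.fib (m + 2) ∧
    ((NS m).filter (fun l => l.head? ≠ some true)).card = Nat.fib (m + 1) := by
  induction m with
  | zero => constructor <;> decide
  | succ m ih =>
    refine ⟨?_, ?_⟩
    · rw [card_NS_succ, ih.1, ih.2]
      conv_rhs => rw [Nat.fib_add_two]
      exact Nat.add_comm (Nat.fib (m+2)) (Nat.fib (m+1))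
    · rw [NS_filter_head, Finset.card_image_of_injective _ (fun a b h => by simpa using h), ih.1]

lemma chain'_NAP_reverse (l : List Bool) : l.reverse.Chain' NAP ↔ l.Chain' NAP := by
  rw [List.Chain', List.Chain', List.isChain_reverse]
  constructor <;> exact fun h => h.imp (by intro a b; simp only [flip, NAP]; tauto)

lemma card_NS_last (m : ℕ) :
    ((NS m).filter (fun l => l.getLast? ≠ some true)).card = Nat.fib (m+1) := by
  rw [← (card_NS m).2]
  apply Finset.card_bij (fun l _ => l.reverse)
  · intro l hl
    simp only [Finset.mem_filter, mem_NS] at hl ⊢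
    obtain ⟨⟨h1, h2⟩, h3⟩ := hl
    exact ⟨⟨by simpa using h1, (chain'_NAP_reverse l).mpr h2⟩, by rwa [List.head?_reverse]⟩
  · intro a _ b _ h
    simpa using congrArg List.reverse h
  · intro l hl
    refine ⟨l.reverse, ?_, by simp⟩
    simp only [Finset.mem_filter, mem_NS] at hl ⊢
    obtain ⟨⟨h1, h2⟩, h3⟩ := hl
    exact ⟨⟨by simpa using h1, (chain'_NAP_reverse l).mpr h2⟩, by rwa [List.getLast?_reverse]⟩

lemma NS_filter_hl (k : ℕ) :
    (NS (k+1)).filter (fun l => l.head? ≠ some true ∧ l.getLast? ≠ some true)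
      = ((NS k).filter (fun l => l.getLast? ≠ some true)).image (List.cons false) := by
  ext l
  simp only [Finset.mem_filter, Finset.mem_image]
  constructor
  · rintro ⟨hl, hh, hlast⟩
    have hm : l ∈ (NS (k+1)).filter (fun l => l.head? ≠ some true) :=
      Finset.mem_filter.mpr ⟨hl, hh⟩
    rw [NS_filter_head] at hm
    obtain ⟨t, ht, rfl⟩ := Finset.mem_image.mp hm
    refine ⟨t, ⟨ht, ?_⟩, rfl⟩
    intro h
    apply hlast
    cases t with
    | nil => simp at h
    | cons b u => rwa [List.getLast?_cons_cons]
  · rintro ⟨t, ⟨ht, hlast⟩, rfl⟩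
    have hm : (false :: t) ∈ (NS k).image (List.cons false) := Finset.mem_image.mpr ⟨t, ht, rfl⟩
    rw [← NS_filter_head] at hm
    obtain ⟨h1, h2⟩ := Finset.mem_filter.mp hm
    refine ⟨h1, h2, ?_⟩
    cases t with
    | nil => simp
    | cons b u => rw [List.getLast?_cons_cons]; exact hlast

lemma card_NS_hl (k : ℕ) :
    ((NS (k+1)).filter (fun l => l.head? ≠ some true ∧ l.getLast? ≠ some true)).card
      = Nat.fib (k+1) := by
  rw [NS_filter_hl, Finset.card_image_of_injective _ (fun a b h => by simpa using h),
    card_NS_last]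

/-- Valid cyclic strings as lists. -/
def Cyc (m : ℕ) : Finset (List Bool) :=
  (NS m).filter (fun l => ¬(l.getLast? = some true ∧ l.head? = some true))

lemma card_Cyc (k : ℕ) : (Cyc (k+2)).card = Nat.fib (k+1) + Nat.fib (k+3) := by
  classical
  have hsplit := Finset.card_filter_add_card_filter_not
    (s := Cyc (k+2)) (p := fun l => l.head? ≠ some true)
  have hA : (Cyc (k+2)).filter (fun l => l.head? ≠ some true)
      = (NS (k+2)).filter (fun l => l.head? ≠ some true) := by
    ext l
    simp only [Cyc, Finset.filter_filter, Finset.mem_filter]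
    tauto
  have hB : (Cyc (k+2)).filter (fun l => ¬(l.head? ≠ some true))
      = ((NS (k+1)).filter
          (fun l => l.head? ≠ some true ∧ l.getLast? ≠ some true)).image (List.cons true) := by
    ext l
    simp only [Cyc, Finset.filter_filter, Finset.mem_filter, Finset.mem_image, not_not]
    constructor
    · rintro ⟨hl, hcyc, hh⟩
      rw [NS] at hl
      rcases Finset.mem_union.mp hl with hm | hm
      · obtain ⟨t, _, rfl⟩ := Finset.mem_image.mp hm
        simp at hh
      · obtain ⟨t, htm, rfl⟩ := Finset.mem_image.mp hm
        obtain ⟨ht, hth⟩ := Finset.mem_filter.mp htm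
        refine ⟨t, ⟨ht, hth, ?_⟩, rfl⟩
        have hlen : t.length = k + 1 := by simpa using (mem_NS _ _).mp ht |>.1
        intro hlast
        cases t with
        | nil => simp at hlen
        | cons b u =>
          rw [List.getLast?_cons_cons] at hcyc
          exact hcyc ⟨hlast, by simp⟩
    · rintro ⟨t, ⟨ht, hth, htl⟩, rfl⟩
      have hlen : t.length = k + 1 := by simpa using (mem_NS _ _).mp ht |>.1
      refine ⟨?_, ?_, by simp⟩
      · rw [NS]
        exact Finset.mem_union_right _ (Finset.mem_image.mpr
          ⟨t, Finset.mem_filter.mpr ⟨ht, hth⟩, rfl⟩)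
      · cases t with
        | nil => simp at hlen
        | cons b u =>
          rw [List.getLast?_cons_cons]
          intro h
          exact htl h.1
  rw [hA, hB] at hsplit
  rw [Finset.card_image_of_injective _ (fun a b h => by simpa using h)] at hsplit
  have h1 := (card_NS (k+2)).2
  have h2 := card_NS_hl k
  have h3 : k + 2 + 1 = k + 3 := rfl
  rw [h3] at h1
  omega

lemma card_Cyc_general (m : ℕ) (hm : 1 ≤ m) :
    (Cyc m).card = Nat.fib (m - 1) + Nat.fib (m + 1) := by
  match m, hm with
  | 1, _ => decide
  | (k+2), _ =>
    have := card_Cyc k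
    simpa using this

def ValidCyc {m : ℕ} (s : ZMod m → Bool) : Prop :=
  ∀ i : ZMod m, ¬(s i = true ∧ s (i + 1) = true)

lemma validCyc_iff_natCast {m : ℕ} [NeZero m] (s : ZMod m → Bool) :
    ValidCyc s ↔ ∀ j : ℕ, j < m →
      ¬(s ((j : ℕ) : ZMod m) = true ∧ s (((j+1 : ℕ)) : ZMod m) = true) := by
  constructor
  · intro h j _
    have := h ((j : ℕ) : ZMod m)
    rwa [show (((j+1 : ℕ)) : ZMod m) = ((j : ℕ) : ZMod m) + 1 by push_cast; ring]
  · intro h i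
    have hi : ((i.val : ℕ) : ZMod m) = i := by simp [ZMod.natCast_val, ZMod.cast_id]
    have := h i.val (ZMod.val_lt i)
    rw [hi] at this
    rwa [show (((i.val+1 : ℕ)) : ZMod m) = i + 1 by push_cast [hi]; ring] at this

lemma toList_mem_Cyc_iff {m : ℕ} [NeZero m] (s : ZMod m → Bool) :
    (List.ofFn fun i : Fin m => s ((i : ℕ) : ZMod m)) ∈ Cyc m ↔ ValidCyc s := by
  have hm : 1 ≤ m := Nat.one_le_iff_ne_zero.mpr (NeZero.ne m)
  set l := List.ofFn fun i : Fin m => s ((i : ℕ) : ZMod m) with hl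
  have hlen : l.length = m := by simp [hl]
  have hget : ∀ (j : ℕ) (h : j < l.length), l.get ⟨j, h⟩ = s ((j : ℕ) : ZMod m) := by
    intro j h
    simp [hl, List.get_ofFn]
  have hchain : l.Chain' NAP ↔ ∀ j : ℕ, j + 1 < m →
      ¬(s ((j:ℕ) : ZMod m) = true ∧ s ((j+1 : ℕ) : ZMod m) = true) := by
    rw [List.Chain', List.isChain_iff_getElem]
    constructor
    · intro h j hj
      have := h j (by omega)
      rwa [show l[j] = _ from hget j (by omega), show l[j+1] = _ from hget (j+1) (by omega)] at this
    · intro h j hj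
      rw [hlen] at hj
      have := h j (by omega)
      rwa [← show l[j] = _ from hget j (by omega), ← show l[j+1] = _ from hget (j+1) (by omega)] at this
  have hhead : l.head? = some (s ((0 : ℕ) : ZMod m)) := by
    rw [List.head?_eq_getElem?, List.getElem?_eq_getElem (by omega)]
    congr 1
    exact hget 0 (by omega)
  have hlast : l.getLast? = some (s ((m - 1 : ℕ) : ZMod m)) := by
    rw [List.getLast?_eq_getElem?, List.getElem?_eq_getElem (by rw [hlen]; omega)]
    congr 1
    have h1 := hget (l.length - 1) (by omega)
    have h2 : s ((l.length - 1 : ℕ) : ZMod m) = s ((m - 1 : ℕ) : ZMod m) := by rw [hlen]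
    exact h1.trans h2
  rw [Cyc, Finset.mem_filter, mem_NS, validCyc_iff_natCast, hhead, hlast]
  constructor
  · rintro ⟨⟨-, hch⟩, hwrap⟩ j hj
    rcases Nat.lt_or_ge (j+1) m with h | h
    · exact (hchain.mp hch) j h
    · have hj' : j = m - 1 := by omega
      subst hj'
      rintro ⟨h1, h2⟩
      apply hwrap
      rw [show (m - 1 + 1 : ℕ) = m by omega, ZMod.natCast_self] at h2
      refine ⟨by rw [h1], ?_⟩
      rw [show ((0:ℕ) : ZMod m) = 0 from Nat.cast_zero, h2]
  · intro h
    refine ⟨⟨hlen, hchain.mpr (fun j hj => h j (by omega))⟩, ?_⟩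
    rintro ⟨h1, h2⟩
    have := h (m - 1) (by omega)
    apply this
    rw [show (m - 1 + 1 : ℕ) = m by omega, ZMod.natCast_self]
    rw [show ((0:ℕ) : ZMod m) = 0 from Nat.cast_zero] at h2
    exact ⟨by injection h1, by injection h2⟩

lemma card_validCyc (m : ℕ) (hm : 1 ≤ m) :
    Nat.card {s : ZMod m → Bool // ValidCyc s} = Nat.fib (m - 1) + Nat.fib (m + 1) := by
  haveI : NeZero m := ⟨by omega⟩
  classical
  rw [Nat.card_eq_fintype_card, Fintype.card_subtype, ← card_Cyc_general m hm]
  apply Finset.card_bij (fun s _ => List.ofFn fun i : Fin m => s ((i : ℕ) : ZMod m))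
  · intro s hs
    exact (toList_mem_Cyc_iff s).mpr (by simpa using hs)
  · intro a ha b hb h
    have h2 := List.ofFn_injective h
    funext i
    have hi : ((i.val : ℕ) : ZMod m) = i := by simp [ZMod.natCast_val, ZMod.cast_id]
    have := congrFun h2 ⟨i.val, ZMod.val_lt i⟩
    simpa [hi] using this
  · intro l hl
    have hlen : l.length = m := by
      simpa using ((mem_NS m l).mp (Finset.mem_filter.mp hl).1).1
    subst hlen
    have hofn : (List.ofFn fun i : Fin l.length =>
        (fun i : ZMod l.length => l.getD i.val false) ((i : ℕ) : ZMod l.length)) = l := by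
      have hfun : ∀ i : Fin l.length,
          (fun i : ZMod l.length => l.getD i.val false) ((i : ℕ) : ZMod l.length)
            = l[(i : ℕ)] := by
        intro i
        simp only [ZMod.val_natCast, Nat.mod_eq_of_lt i.isLt]
        rw [List.getD_eq_getElem?_getD, List.getElem?_eq_getElem i.isLt]
        rfl
      rw [funext hfun]
      exact List.ofFn_getElem (xs := l)
    refine ⟨fun i => l.getD i.val false, ?_, hofn⟩
    simp only [Finset.mem_filter, Finset.mem_univ, true_and]
    apply (toList_mem_Cyc_iff _).mp
    rw [hofn]
    exact hl

instance shiftAction (n : ℕ) : AddAction (ZMod n) {s : ZMod n → Bool // ValidCyc s} where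
  vadd r s := ⟨fun i => s.1 (i + r), by
    intro i
    have := s.2 (i + r)
    rwa [show i + r + 1 = i + 1 + r by ring] at this⟩
  zero_vadd s := by
    apply Subtype.ext
    funext i
    show s.1 (i + 0) = s.1 i
    rw [add_zero]
  add_vadd a b s := by
    apply Subtype.ext
    funext i
    show s.1 (i + (a + b)) = s.1 (i + a + b)
    rw [add_assoc]

lemma shift_vadd_apply {n : ℕ} (r : ZMod n) (s : {s : ZMod n → Bool // ValidCyc s}) (i : ZMod n) :
    (r +ᵥ s).1 i = s.1 (i + r) := rfl

lemma card_fixedBy (n : ℕ) (hn : 1 ≤ n) (a : ZMod n) :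
    Nat.card (AddAction.fixedBy {s : ZMod n → Bool // ValidCyc s} a)
      = Nat.card {t : ZMod (n.gcd a.val) → Bool // ValidCyc t} := by
  haveI : NeZero n := ⟨by omega⟩
  set d := n.gcd a.val with hd
  have hdvd : d ∣ n := Nat.gcd_dvd_left n a.val
  have hdpos : 0 < d := Nat.gcd_pos_of_pos_left _ (by omega)
  haveI : NeZero d := ⟨by omega⟩
  set c : ZMod n → ZMod d := ⇑(ZMod.castHom hdvd (ZMod d)) with hc
  have hcast_add_one : ∀ x : ZMod n, c (x + 1) = c x + 1 := by
    intro x; rw [hc]; rw [map_add, map_one]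
  have hcast_a : c a = 0 := by
    have h1 : ((a.val : ℕ) : ZMod n) = a := by simp [ZMod.natCast_val, ZMod.cast_id]
    rw [← h1, hc, map_natCast]
    exact (ZMod.natCast_eq_zero_iff a.val d).mpr (Nat.gcd_dvd_right n a.val)
  have hsec : ∀ j : ZMod d, c ((j.val : ℕ) : ZMod n) = j := by
    intro j
    rw [hc, map_natCast]
    simp [ZMod.natCast_val, ZMod.cast_id]
  -- the bijection
  let F : {t : ZMod d → Bool // ValidCyc t} → (AddAction.fixedBy {s : ZMod n → Bool // ValidCyc s} a) :=
    fun t => ⟨⟨fun i => t.1 (c i), by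
        intro i
        have := t.2 (c i)
        rwa [← hcast_add_one] at this⟩, by
      show _ +ᵥ _ = _
      apply Subtype.ext
      funext i
      show t.1 (c (i + a)) = t.1 (c i)
      rw [hc, map_add, ← hc, hcast_a, add_zero]⟩
  refine (Nat.card_eq_of_bijective F ?_).symm
  constructor
  · intro t t' h
    apply Subtype.ext
    funext j
    have h1 : t.1 (c (((j.val : ℕ) : ZMod n))) = t'.1 (c (((j.val : ℕ) : ZMod n))) :=
      congrFun (congrArg (fun z => z.1.1) h) _
    rw [hsec j] at h1
    exact h1
  · rintro ⟨⟨s, hs⟩, hfix⟩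
    have hshift : ∀ i, s (i + a) = s i := by
      intro i
      exact congrFun (congrArg Subtype.val hfix) i
    have h1 : ∀ (k : ℕ) (i : ZMod n), s (i + (k : ZMod n) * a) = s i := by
      intro k
      induction k with
      | zero => intro i; simp
      | succ k ih =>
        intro i
        have : i + ((k+1 : ℕ) : ZMod n) * a = (i + a) + (k : ZMod n) * a := by push_cast; ring
        rw [this, ih (i + a), hshift i]
    have hbez : (d : ZMod n) = ((Nat.gcdA n a.val : ℤ) : ZMod n) * ((n : ZMod n))
        + ((Nat.gcdB n a.val : ℤ) : ZMod n) * a := by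
      have hb : (d : ℤ) = n * Nat.gcdA n a.val + a.val * Nat.gcdB n a.val :=
        Nat.gcd_eq_gcd_ab n a.val
      have : ((d : ℤ) : ZMod n) = ((n * Nat.gcdA n a.val + a.val * Nat.gcdB n a.val : ℤ) : ZMod n) := by
        rw [← hb]
      push_cast at this
      rw [ZMod.natCast_val, ZMod.cast_id] at this
      rw [this]
      ring
    have hd2 : ∀ i, s (i + (d : ZMod n)) = s i := by
      intro i
      rw [hbez, ZMod.natCast_self, mul_zero, zero_add]
      set e : ZMod n := ((Nat.gcdB n a.val : ℤ) : ZMod n) with he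
      have : e = ((e.val : ℕ) : ZMod n) := by simp [ZMod.natCast_val, ZMod.cast_id]
      rw [this]
      exact h1 e.val i
    have h3 : ∀ (k : ℕ) (i : ZMod n), s (i + (k : ZMod n) * (d : ZMod n)) = s i := by
      intro k
      induction k with
      | zero => intro i; simp
      | succ k ih =>
        intro i
        have : i + ((k+1 : ℕ) : ZMod n) * (d : ZMod n)
            = (i + (d : ZMod n)) + (k : ZMod n) * (d : ZMod n) := by push_cast; ring
        rw [this, ih, hd2 i]
    have hfactor : ∀ i : ZMod n, s (((i.val % d : ℕ)) : ZMod n) = s i := by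
      intro i
      have hi : i = ((i.val % d + d * (i.val / d) : ℕ) : ZMod n) := by
        rw [Nat.mod_add_div]
        simp [ZMod.natCast_val, ZMod.cast_id]
      conv_rhs => rw [hi]
      push_cast
      rw [show ((i.val % d : ℕ) : ZMod n) + (d : ZMod n) * ((i.val / d : ℕ) : ZMod n)
          = ((i.val % d : ℕ) : ZMod n) + ((i.val / d : ℕ) : ZMod n) * (d : ZMod n) by ring]
      exact (h3 (i.val / d) _).symm
    have hcval : ∀ i : ZMod n, (c i).val = i.val % d := by
      intro i
      have h1 : ((i.val : ℕ) : ZMod n) = i := by simp [ZMod.natCast_val, ZMod.cast_id]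
      have h2 : c i = ((i.val : ℕ) : ZMod d) := by
        conv_lhs => rw [← h1]
        rw [hc, map_natCast]
      rw [h2, ZMod.val_natCast]
    have hcomp : ∀ i : ZMod n, s ((((c i).val : ℕ)) : ZMod n) = s i := by
      intro i
      rw [hcval i]
      exact hfactor i
    refine ⟨⟨fun j => s ((j.val : ℕ) : ZMod n), ?_⟩, ?_⟩
    · intro j
      have hj : c ((j.val : ℕ) : ZMod n) = j := hsec j
      have h2 : c (((j.val : ℕ) : ZMod n) + 1) = j + 1 := by rw [hcast_add_one, hj]
      have e1 : s ((j.val : ℕ) : ZMod n) = s (((((c (((j.val : ℕ) : ZMod n))).val : ℕ)) : ZMod n)) := by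
        rw [hcomp]
      have := hs (((j.val : ℕ) : ZMod n))
      rintro ⟨u1, u2⟩
      apply this
      constructor
      · exact u1
      · rw [← hcomp (((j.val : ℕ) : ZMod n) + 1), h2]
        exact u2
    · apply Subtype.ext
      apply Subtype.ext
      funext i
      show s ((((c i).val : ℕ)) : ZMod n) = s i
      exact hcomp i

lemma sum_gcd (n : ℕ) [NeZero n] (hn : 1 ≤ n) (f : ℕ → ℕ) :
    ∑ a : ZMod n, f (n.gcd (ZMod.val a))
      = ∑ d ∈ n.divisors, Nat.totient (n / d) * f d := by
  have h1 : ∑ a : ZMod n, f (n.gcd a.val) = ∑ k ∈ Finset.range n, f (n.gcd k) := by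
    apply Finset.sum_nbij' (i := fun a : ZMod n => a.val) (j := fun k : ℕ => (k : ZMod n))
    · intro a _
      exact Finset.mem_range.mpr (ZMod.val_lt a)
    · intro k _
      exact Finset.mem_univ _
    · intro a _
      simp [ZMod.natCast_val, ZMod.cast_id]
    · intro k hk
      rw [ZMod.val_natCast, Nat.mod_eq_of_lt (Finset.mem_range.mp hk)]
    · intro a _
      rfl
  rw [h1]
  have h2 : ∀ k ∈ Finset.range n, n.gcd k ∈ n.divisors := by
    intro k _
    exact Nat.mem_divisors.mpr ⟨Nat.gcd_dvd_left n k, by omega⟩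
  rw [← Finset.sum_fiberwise_of_maps_to h2 (fun k => f (n.gcd k))]
  apply Finset.sum_congr rfl
  intro d hd
  have hdvd : d ∣ n := (Nat.mem_divisors.mp hd).1
  have h3 : ∑ k ∈ Finset.filter (fun k => n.gcd k = d) (Finset.range n), f (n.gcd k)
      = (Finset.filter (fun k => n.gcd k = d) (Finset.range n)).card * f d := by
    rw [Finset.sum_congr rfl (fun k hk => by rw [(Finset.mem_filter.mp hk).2]),
      Finset.sum_const, smul_eq_mul]
  rw [h3, ← Nat.totient_div_of_dvd hdvd]

/-- The number of binary necklaces of length `n` with no two cyclically consecutive 1s,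
i.e. orbits of the cyclic rotation action of `ℤ/nℤ` on binary strings `ZMod n → Bool`
with no index `i` such that positions `i` and `i+1` both carry a 1, equals
`(1/n) ∑_{d ∣ n} φ(n/d) (F_{d−1} + F_{d+1})`. -/
theorem stmt15 (n : ℕ) (hn : 1 ≤ n) :
    (Set.ncard {C : Set (ZMod n → Bool) |
        ∃ s : ZMod n → Bool,
          (∀ i : ZMod n, ¬(s i = true ∧ s (i + 1) = true)) ∧
          C = {t | ∃ r : ZMod n, ∀ i, t i = s (i + r)}} : ℚ)
      = (1 / (n : ℚ)) * ∑ d ∈ n.divisors,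
          (Nat.totient (n / d) : ℚ) * ((Nat.fib (d - 1) : ℚ) + (Nat.fib (d + 1) : ℚ)) := by
  haveI : NeZero n := ⟨by omega⟩
  classical
  set X := {s : ZMod n → Bool // ValidCyc s} with hX
  haveI : Fintype X := Fintype.ofFinite _
  haveI : ∀ a : ZMod n, Fintype (AddAction.fixedBy X a) := fun a => Fintype.ofFinite _
  haveI : Fintype (Quotient (AddAction.orbitRel (ZMod n) X)) := Fintype.ofFinite _
  -- the orbit map
  have hcompat : ∀ (x y : X), (AddAction.orbitRel (ZMod n) X) x y →
      ({t | ∃ r : ZMod n, ∀ i, t i = x.1 (i + r)} : Set (ZMod n → Bool))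
        = {t | ∃ r : ZMod n, ∀ i, t i = y.1 (i + r)} := by
    intro x y hxy
    obtain ⟨g, hg⟩ := AddAction.mem_orbit_iff.mp hxy
    have hxg : ∀ i, x.1 i = y.1 (i + g) := by
      intro i
      rw [← hg]
      rfl
    ext t
    simp only [Set.mem_setOf_eq]
    constructor
    · rintro ⟨r, hr⟩
      refine ⟨r + g, fun i => ?_⟩
      rw [hr i, hxg, add_assoc]
    · rintro ⟨r, hr⟩
      refine ⟨r - g, fun i => ?_⟩
      rw [hr i, hxg]
      congr 1
      ring
  set q : Quotient (AddAction.orbitRel (ZMod n) X) → Set (ZMod n → Bool) :=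
    Quotient.lift (fun x : X => {t | ∃ r : ZMod n, ∀ i, t i = x.1 (i + r)}) hcompat with hq
  have hqmk : ∀ x : X, q ⟦x⟧ = {t | ∃ r : ZMod n, ∀ i, t i = x.1 (i + r)} := fun x => rfl
  have hself : ∀ x : X, x.1 ∈ q ⟦x⟧ := by
    intro x
    exact ⟨0, fun i => by rw [add_zero]⟩
  have hinj : Function.Injective q := by
    intro u v
    induction u using Quotient.ind
    induction v using Quotient.ind
    rename_i x y
    intro h
    rw [hqmk, hqmk] at h
    have hx : x.1 ∈ {t | ∃ r : ZMod n, ∀ i, t i = y.1 (i + r)} := h ▸ hself x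
    obtain ⟨r, hr⟩ := hx
    apply Quotient.sound
    show x ∈ AddAction.orbit (ZMod n) y
    exact AddAction.mem_orbit_iff.mpr ⟨r, Subtype.ext (funext fun i => (hr i).symm)⟩
  have hrange : {C : Set (ZMod n → Bool) |
      ∃ s : ZMod n → Bool,
        (∀ i : ZMod n, ¬(s i = true ∧ s (i + 1) = true)) ∧
        C = {t | ∃ r : ZMod n, ∀ i, t i = s (i + r)}} = Set.range q := by
    ext C
    simp only [Set.mem_setOf_eq, Set.mem_range]
    constructor
    · rintro ⟨s, hs, rfl⟩
      exact ⟨⟦⟨s, hs⟩⟧, rfl⟩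
    · rintro ⟨u, rfl⟩
      induction u using Quotient.ind
      rename_i x
      exact ⟨x.1, x.2, rfl⟩
  have hcardset : Set.ncard {C : Set (ZMod n → Bool) |
      ∃ s : ZMod n → Bool,
        (∀ i : ZMod n, ¬(s i = true ∧ s (i + 1) = true)) ∧
        C = {t | ∃ r : ZMod n, ∀ i, t i = s (i + r)}}
      = Fintype.card (Quotient (AddAction.orbitRel (ZMod n) X)) := by
    rw [hrange, ← Nat.card_coe_set_eq,
      Nat.card_congr (Equiv.ofInjective q hinj).symm, Nat.card_eq_fintype_card]
  -- Burnside
  have hburn := AddAction.sum_card_fixedBy_eq_card_orbits_mul_card_addGroup (ZMod n) X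
  rw [ZMod.card] at hburn
  have hfix : ∀ a : ZMod n, Fintype.card (AddAction.fixedBy X a)
      = Nat.fib (n.gcd a.val - 1) + Nat.fib (n.gcd a.val + 1) := by
    intro a
    have hg1 : 1 ≤ n.gcd a.val := by
      rcases Nat.eq_zero_or_pos (n.gcd a.val) with h | h
      · exfalso
        exact (Nat.one_le_iff_ne_zero.mp hn) (Nat.eq_zero_of_gcd_eq_zero_left h)
      · exact h
    have e1 : Nat.card (AddAction.fixedBy X a)
        = Nat.card {t : ZMod (n.gcd a.val) → Bool // ValidCyc t} := card_fixedBy n hn a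
    have e2 := card_validCyc (n.gcd a.val) hg1
    rw [← Nat.card_eq_fintype_card, e1, e2]
  have hb2 : ∑ a : ZMod n, Fintype.card (AddAction.fixedBy X a)
      = ∑ a : ZMod n, (Nat.fib (n.gcd a.val - 1) + Nat.fib (n.gcd a.val + 1)) :=
    Finset.sum_congr rfl (fun a _ => hfix a)
  rw [hb2] at hburn
  have hsum := sum_gcd n hn (fun d => Nat.fib (d - 1) + Nat.fib (d + 1))
  rw [hsum] at hburn
  -- final arithmetic
  have hQ : ((Fintype.card (Quotient (AddAction.orbitRel (ZMod n) X)) : ℚ)) * n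
      = ∑ d ∈ n.divisors,
          (Nat.totient (n / d) : ℚ) * ((Nat.fib (d - 1) : ℚ) + (Nat.fib (d + 1) : ℚ)) := by
    have hc := congrArg (fun z : ℕ => (z : ℚ)) hburn
    push_cast at hc
    linarith [hc]
  have hnq : (n : ℚ) ≠ 0 := by positivity
  rw [hcardset]
  field_simp
  linear_combination hQ
end
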